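/- arXiv:2411.19208 — 2 statements merged into one kernel-verified Lean document; each statement's English description precedes it below -/
import Mathlib

section
/- Let $n, \tilde{n}, d, p$ be integers with $0 \le d < \min\{n,\tilde{n}\}$ and $0 \le p \le \min\{n,\tilde{n}\} - d$. Then there exists a bijection $\Phi$ between $\bar{\mathcal{S}}_{\le p}(n,d)$ and $\bar{\mathcal{S}}_{\le p}(\tilde{n},d)$ such that for all $\sigma, \sigma' \in \bar{\mathcal{S}}_{\le p}(n,d)$ one has $\sigma \preceq_{\bar{\mathcal{S}}} \sigma'$ if and only if $\Phi(\sigma) \preceq_{\bar{\mathcal{S}}} \Phi(\sigma')$. -/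
/-! Common definitions: signotopes and co-signotopes on `[n] = {1, …, n}` (encoded as
`Finset.Icc 1 n` in `ℕ`), sign functions are `Finset ℕ → Bool` (`true` = `+`, `false` = `-`)
that vanish (are `-`) away from the relevant subsets. -/

open Classical in
/-- The sign function with `+`-set `S` (and `-` elsewhere). -/
noncomputable def ofPlusSet (S : Set (Finset ℕ)) : Finset ℕ → Bool :=
  fun A => if A ∈ S then true else false

/-- Number of sign changes in a list of signs. -/
def signChanges (l : List Bool) : ℕ :=
  ((l.zip l.tail).filter fun p => p.1 ≠ p.2).length

/-- Number of `+`-subsets of a sign function. -/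
noncomputable def plusCount (τ : Finset ℕ → Bool) : ℕ :=
  {A : Finset ℕ | τ A = true}.ncard

/-- The series of signs `τ (C ∪ {x})` for `x ∈ [n] \ C` in increasing order.
For a `d`-subset `B` with `i`-th smallest element `b`, `series n τ (B.erase b)` is
the `(τ,B,i)`-series. -/
def series (n : ℕ) (τ : Finset ℕ → Bool) (C : Finset ℕ) : List Bool :=
  ((Finset.Icc 1 n \ C).sort (· ≤ ·)).map fun x => τ (insert x C)

/-- An `r`-signotope on `[n]`, encoded as a sign function on all of `Finset ℕ`
which is `-` away from the `r`-subsets of `[n]`. -/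
def IsSignotope (n r : ℕ) (σ : Finset ℕ → Bool) : Prop :=
  (∀ A, σ A = true → A ⊆ Finset.Icc 1 n ∧ A.card = r) ∧
  ∀ X : Finset ℕ, X ⊆ Finset.Icc 1 n → X.card = r + 1 →
    signChanges ((X.sort (· ≤ ·)).map fun x => σ (X.erase x)) ≤ 1

/-- A `d`-co-signotope on `[n]`: every `(τ,B,i)`-series has at most one sign change. -/
def IsCoSignotope (n d : ℕ) (τ : Finset ℕ → Bool) : Prop :=
  (∀ A, τ A = true → A ⊆ Finset.Icc 1 n ∧ A.card = d) ∧
  ∀ B : Finset ℕ, B ⊆ Finset.Icc 1 n → B.card = d → ∀ b ∈ B,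
    signChanges (series n τ (B.erase b)) ≤ 1

/-- `𝒮_p(n,r)`: `r`-signotopes on `[n]` with exactly `p` `+`-signs. -/
noncomputable def sigSet (n r p : ℕ) : Set (Finset ℕ → Bool) :=
  {σ | IsSignotope n r σ ∧ plusCount σ = p}

/-- `𝒮_{≤p}(n,r)`. -/
noncomputable def sigSetLe (n r p : ℕ) : Set (Finset ℕ → Bool) :=
  {σ | IsSignotope n r σ ∧ plusCount σ ≤ p}

/-- `𝒮̄_p(n,d)`: `d`-co-signotopes on `[n]` with exactly `p` `+`-subsets. -/
noncomputable def coSigSet (n d p : ℕ) : Set (Finset ℕ → Bool) :=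
  {τ | IsCoSignotope n d τ ∧ plusCount τ = p}

/-- `𝒮̄_{≤p}(n,d)`. -/
noncomputable def coSigSetLe (n d p : ℕ) : Set (Finset ℕ → Bool) :=
  {τ | IsCoSignotope n d τ ∧ plusCount τ ≤ p}

/-- `σ` and `τ` differ by a single step: `σ⁻¹(+) ⊊ τ⁻¹(+)` and `|τ⁻¹(+)| = |σ⁻¹(+)| + 1`. -/
noncomputable def SingleStep (σ τ : Finset ℕ → Bool) : Prop :=
  {A | σ A = true} ⊂ {A | τ A = true} ∧ plusCount τ = plusCount σ + 1

/-- The higher Bruhat order on `r`-signotopes on `[n]`: reflexive-transitive closure of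
the single step relation. -/
noncomputable def BruhatLe (n r : ℕ) (σ τ : Finset ℕ → Bool) : Prop :=
  Relation.ReflTransGen (fun a b => IsSignotope n r a ∧ IsSignotope n r b ∧ SingleStep a b) σ τ

/-- The complementary higher Bruhat order on `d`-co-signotopes on `[n]`. -/
noncomputable def CoBruhatLe (n d : ℕ) (σ τ : Finset ℕ → Bool) : Prop :=
  Relation.ReflTransGen (fun a b => IsCoSignotope n d a ∧ IsCoSignotope n d b ∧ SingleStep a b) σ τ

/-- Adjacency in the graph `G_{n,d}`: `B' = (B \ {x}) ∪ {y}` with no element of `B \ {x}`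
strictly between `x` and `y`. -/
def GAdj (n d : ℕ) (B B' : Finset ℕ) : Prop :=
  B ⊆ Finset.Icc 1 n ∧ B.card = d ∧ B' ⊆ Finset.Icc 1 n ∧ B'.card = d ∧
  ∃ x ∈ B, ∃ y ∈ Finset.Icc 1 n, y ∉ B ∧ B' = insert y (B.erase x) ∧
    ∀ z ∈ B.erase x, ¬(min x y < z ∧ z < max x y)

/-- The source subset `S_{n,d,i} = {1,…,i} ∪ {n-d+i+1,…,n}`. -/
def sourceSubset (n d i : ℕ) : Finset ℕ :=
  Finset.Icc 1 i ∪ Finset.Icc (n - d + i + 1) n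

/-- Connectivity inside the `+`-subsets of `τ` (the induced subgraph `G_{n,d}[τ]`). -/
def plusConn (n d : ℕ) (τ : Finset ℕ → Bool) : Finset ℕ → Finset ℕ → Prop :=
  Relation.ReflTransGen fun A A' => τ A = true ∧ τ A' = true ∧ GAdj n d A A'

/-- The vertex set `𝒞^τ_i` of the `+`-component of `τ` containing `S_{n,d,i}`
(empty if `S_{n,d,i}` is not a `+`-subset). -/
def comp (n d : ℕ) (τ : Finset ℕ → Bool) (i : ℕ) : Set (Finset ℕ) :=
  {B | τ (sourceSubset n d i) = true ∧ τ B = true ∧ plusConn n d τ (sourceSubset n d i) B}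

/-- The `j`-th smallest element (1-based) of a finite set of naturals. -/
def nthElt (B : Finset ℕ) (j : ℕ) : ℕ := (B.sort (· ≤ ·)).getD (j - 1) 0

/-- `b_j` with the conventions `b_0 = 0` and `b_{d+1} = n+1` (as an integer). -/
def extNth (n d : ℕ) (B : Finset ℕ) (j : ℕ) : ℤ :=
  if j = 0 then 0 else if j ≤ d then (nthElt B j : ℤ) else (n : ℤ) + 1

/-- A series is left-aligned if it starts with `+` and ends with `-`. -/
def LeftAligned (l : List Bool) : Prop :=
  l.head? = some true ∧ l.getLast? = some false

/-- A series is right-aligned if it starts with `-` and ends with `+`. -/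
def RightAligned (l : List Bool) : Prop :=
  l.head? = some false ∧ l.getLast? = some true

/-- `𝒮̄_{p,i}(n,d)`: co-signotopes in `𝒮̄_p(n,d)` whose only nonempty `+`-component
is `𝒞^τ_i` (i.e. every `+`-subset lies in `𝒞^τ_i`). -/
noncomputable def coSigOnly (n d p i : ℕ) : Set (Finset ℕ → Bool) :=
  {τ | IsCoSignotope n d τ ∧ plusCount τ = p ∧ ∀ B, τ B = true → B ∈ comp n d τ i}

/-- `Z(d,i)`: points `(a_1,…,a_d) ∈ ℤ_{>0}^d` (0-indexed in Lean) with `a_j ≥ a_{j-1}`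
for `j ∈ [2,i]` and `a_j ≥ a_{j+1}` for `j ∈ [i+1,d-1]` (1-based indices). -/
def ZSet (d i : ℕ) : Set (Fin d → ℤ) :=
  {a | (∀ j, 0 < a j) ∧
    (∀ j k : Fin d, (j : ℕ) + 1 = (k : ℕ) → (k : ℕ) + 1 ≤ i → a j ≤ a k) ∧
    (∀ j k : Fin d, (j : ℕ) + 1 = (k : ℕ) → i ≤ (j : ℕ) → a k ≤ a j)}

/-- A `(d,i)`-Ferrers diagram with respect to `p`. -/
def IsFerrers (d i p : ℕ) (F : Set (Fin d → ℤ)) : Prop :=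
  F ⊆ ZSet d i ∧ F.ncard = p ∧
  ∀ a ∈ F, ∀ a' ∈ ZSet d i, (∀ j, a' j ≤ a j) → a' ∈ F

/-- The number of `(d,i)`-Ferrers diagrams with respect to `p`. -/
noncomputable def ferrersCount (d i p : ℕ) : ℕ :=
  {F : Set (Fin d → ℤ) | IsFerrers d i p F}.ncard

/-- `f_{n,d,i,j}` (here `j` is the 1-based coordinate index). -/
def fFun (n d i j : ℕ) (x : ℕ) : ℤ :=
  if j ≤ i then (x : ℤ) - j + 1 else ((n : ℤ) - x) - ((d : ℤ) - j) + 1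

/-- `g_{n,d,i}` maps a `d`-subset `B = (b_1 < … < b_d)` to
`(f_{n,d,i,1}(b_1), …, f_{n,d,i,d}(b_d))`. -/
def gMap (n d i : ℕ) (B : Finset ℕ) : Fin d → ℤ :=
  fun k => fFun n d i ((k : ℕ) + 1) (nthElt B ((k : ℕ) + 1))

/-- A sparse composition of `p` of length `d+1`. -/
def IsSparseComposition (d p : ℕ) (c : Fin (d + 1) → ℕ) : Prop :=
  (∑ i, c i) = p ∧
  ∀ i : Fin (d + 1), 1 ≤ (i : ℕ) →
    c i = 0 ∨ c ⟨(i : ℕ) - 1, lt_of_le_of_lt (Nat.sub_le _ _) i.isLt⟩ = 0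

/-- The component `τ_i` of the `+`-component decomposition `Δ(τ)`:
the sign function whose `+`-set is `𝒞^τ_i`. -/
noncomputable def compFun (n d : ℕ) (τ : Finset ℕ → Bool) (i : ℕ) : Finset ℕ → Bool :=
  ofPlusSet (comp n d τ i)

/-- Keep the `i` smallest elements of `B` and shift the others by `ñ - n`
(this is `g⁻¹_{ñ,d,i} ∘ g_{n,d,i}` on `d`-subsets). -/
def gammaSet (n tn i : ℕ) (B : Finset ℕ) : Finset ℕ :=
  ((B.sort (· ≤ ·)).mapIdx fun k x => if k < i then x else x + tn - n).toFinset

/-- The map `h_{n,ñ,d,p,i}` on sign functions. -/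
noncomputable def hFun (n tn i : ℕ) (τ : Finset ℕ → Bool) : Finset ℕ → Bool :=
  ofPlusSet {A | ∃ B, τ B = true ∧ A = gammaSet n tn i B}

open Classical in
/-- `γ_{τ,ñ}(B)`: replace `b_j` by `b_j + ñ - n` whenever the `(τ,B,j)`-series is
right-aligned. -/
noncomputable def gammaFun (n tn : ℕ) (τ : Finset ℕ → Bool) (B : Finset ℕ) : Finset ℕ :=
  B.image fun x => if RightAligned (series n τ (B.erase x)) then x + tn - n else x

/-- The simple bijection `φ_{n,ñ,d,p}` on sign functions. -/
noncomputable def phiFun (n tn : ℕ) (τ : Finset ℕ → Bool) : Finset ℕ → Bool :=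
  ofPlusSet {A | ∃ B, τ B = true ∧ A = gammaFun n tn τ B}
namespace CoSigProof


lemma signChanges_cons_cons (a b : Bool) (l : List Bool) :
    signChanges (a :: b :: l) = (if a = b then 0 else 1) + signChanges (b :: l) := by
  by_cases h : a = b <;> simp [signChanges, List.zip, h] <;> omega

lemma sc_cons_le (a : Bool) (l : List Bool) : signChanges l ≤ signChanges (a :: l) := by
  cases l with
  | nil => simp [signChanges]
  | cons b t => rw [signChanges_cons_cons]; omega

lemma sc_mid (a b : Bool) (l : List Bool) :
    signChanges (a :: l) ≤ signChanges (a :: b :: l) := by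
  cases l with
  | nil =>
    rw [signChanges_cons_cons]; exact Nat.le_add_left _ _
  | cons c t =>
    rw [signChanges_cons_cons, signChanges_cons_cons a b, signChanges_cons_cons b c]
    cases a <;> cases b <;> cases c <;> simp <;> omega

lemma sc_cons_sublist {l₁ l₂ : List Bool} (h : l₁.Sublist l₂) :
    ∀ a, signChanges (a :: l₁) ≤ signChanges (a :: l₂) := by
  induction h with
  | slnil => intro a; exact le_rfl
  | cons b h ih =>
    intro a
    exact le_trans (ih a) (sc_mid a b _)
  | cons_cons b h ih =>
    intro a
    rw [signChanges_cons_cons, signChanges_cons_cons]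
    exact Nat.add_le_add_left (ih b) _

lemma sc_sublist {l₁ l₂ : List Bool} (h : l₁.Sublist l₂) :
    signChanges l₁ ≤ signChanges l₂ := by
  induction h with
  | slnil => exact le_rfl
  | cons b h ih => exact le_trans ih (sc_cons_le b _)
  | cons_cons b h ih => exact sc_cons_sublist h b

lemma sc_three {a b c : Bool} {l : List Bool} (hab : a ≠ b) (hbc : b ≠ c)
    (h : [a, b, c].Sublist l) : 2 ≤ signChanges l := by
  refine le_trans ?_ (sc_sublist h)
  rw [signChanges_cons_cons, signChanges_cons_cons]
  simp [hab, hbc, signChanges]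

lemma sc_const {l : List Bool} {c : Bool} (h : ∀ x ∈ l, x = c) : signChanges l = 0 := by
  induction l with
  | nil => rfl
  | cons a t ih =>
    cases t with
    | nil => rfl
    | cons b t' =>
      have ha := h a (by simp)
      have hb := h b (by simp)
      subst ha; subst hb
      rw [signChanges_cons_cons, if_pos rfl,
        ih (fun x hx => h x (List.mem_cons_of_mem _ hx))]

lemma sc_map_prefix {f : ℕ → Bool} {M : ℕ} :
    ∀ L : List ℕ, L.Pairwise (· ≤ ·) → (∀ x ∈ L, f x = true ↔ x ≤ M) →
      signChanges (L.map f) ≤ 1 := by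
  intro L
  induction L with
  | nil => intro _ _; simp [signChanges]
  | cons a t ih =>
    intro hs hf
    have hs' := (List.pairwise_cons.mp hs)
    by_cases hfa : f a = true
    · cases t with
      | nil => simp [signChanges]
      | cons b t' =>
        rw [List.map_cons, List.map_cons, signChanges_cons_cons]
        by_cases hfb : f b = true
        · rw [hfa, hfb, if_pos rfl]
          have := ih hs'.2 (fun x hx => hf x (List.mem_cons_of_mem _ hx))
          rw [List.map_cons, hfb] at this
          omega
        · -- b > M, all of t' ≥ b hence false
          have hb' : ¬ b ≤ M := fun hb => hfb ((hf b (by simp)).mpr hb)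
          have hall : ∀ x ∈ (b :: t').map f, x = false := by
            intro x hx
            rw [List.mem_map] at hx
            obtain ⟨y, hy, rfl⟩ := hx
            have hby : b ≤ y := by
              rcases List.mem_cons.mp hy with rfl | hy'
              · exact le_rfl
              · exact (List.pairwise_cons.mp hs'.2).1 y hy'
            have : ¬ y ≤ M := fun h => hb' (le_trans hby h)
            simpa using fun hc => this ((hf y (List.mem_cons_of_mem _ hy)).mp hc)
          have h0 := sc_const hall
          rw [List.map_cons] at h0
          have hif : (if f a = f b then (0:ℕ) else 1) ≤ 1 := by split <;> omega
          omega
    · -- a > M so everything is > M: all false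
      have ha' : ¬ a ≤ M := fun ha => hfa ((hf a (by simp)).mpr ha)
      have hall : ∀ x ∈ (a :: t).map f, x = false := by
        intro x hx
        rw [List.mem_map] at hx
        obtain ⟨y, hy, rfl⟩ := hx
        have hay : a ≤ y := by
          rcases List.mem_cons.mp hy with rfl | hy'
          · exact le_rfl
          · exact hs'.1 y hy'
        have : ¬ y ≤ M := fun h => ha' (le_trans hay h)
        simpa using fun hc => this ((hf y hy).mp hc)
      have h0 := sc_const hall
      rw [List.map_cons] at h0
      rw [List.map_cons]
      omega

lemma sc_map_suffix {f : ℕ → Bool} {M : ℕ} :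
    ∀ L : List ℕ, L.Pairwise (· ≤ ·) → (∀ x ∈ L, f x = true ↔ M ≤ x) →
      signChanges (L.map f) ≤ 1 := by
  intro L
  induction L with
  | nil => intro _ _; simp [signChanges]
  | cons a t ih =>
    intro hs hf
    have hs' := (List.pairwise_cons.mp hs)
    by_cases hfa : f a = true
    · -- all true
      have hall : ∀ x ∈ (a :: t).map f, x = true := by
        intro x hx
        rw [List.mem_map] at hx
        obtain ⟨y, hy, rfl⟩ := hx
        have hay : a ≤ y := by
          rcases List.mem_cons.mp hy with rfl | hy'
          · exact le_rfl
          · exact hs'.1 y hy'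
        exact (hf y hy).mpr (le_trans ((hf a (by simp)).mp hfa) hay)
      have h0 := sc_const hall
      rw [List.map_cons] at h0
      rw [List.map_cons]
      omega
    · cases t with
      | nil => simp [signChanges]
      | cons b t' =>
        rw [List.map_cons, List.map_cons, signChanges_cons_cons]
        by_cases hfb : f b = true
        · -- all of b::t' true
          have hall : ∀ x ∈ (b :: t').map f, x = true := by
            intro x hx
            rw [List.mem_map] at hx
            obtain ⟨y, hy, rfl⟩ := hx
            have hby : b ≤ y := by
              rcases List.mem_cons.mp hy with rfl | hy'
              · exact le_rfl
              · exact (List.pairwise_cons.mp hs'.2).1 y hy'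
            exact (hf y (List.mem_cons_of_mem _ hy)).mpr
              (le_trans ((hf b (by simp)).mp hfb) hby)
          have h0 := sc_const hall
          rw [List.map_cons] at h0
          have hif : (if f a = f b then (0:ℕ) else 1) ≤ 1 := by split <;> omega
          omega
        · rw [Bool.not_eq_true] at hfa hfb
          rw [hfa, hfb, if_pos rfl]
          have := ih hs'.2 (fun x hx => hf x (List.mem_cons_of_mem _ hx))
          rw [List.map_cons, hfb] at this
          omega

lemma sorted_pair_sublist : ∀ (L : List ℕ), L.Pairwise (· < ·) →
    ∀ {y z : ℕ}, y ∈ L → z ∈ L → y < z → [y, z].Sublist L := by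
  intro L
  induction L with
  | nil => intro _ y z hy; simp at hy
  | cons a t ih =>
    intro hs y z hy hz hyz
    have hs' := List.pairwise_cons.mp hs
    rcases List.mem_cons.mp hy with rfl | hy'
    · -- y = a, z ∈ t
      have hz' : z ∈ t := by
        rcases List.mem_cons.mp hz with rfl | h
        · omega
        · exact h
      exact (List.singleton_sublist.mpr hz').cons₂ y
    · have hz' : z ∈ t := by
        rcases List.mem_cons.mp hz with rfl | h
        · exact absurd (hs'.1 y hy') (by omega)
        · exact h
      exact (ih hs'.2 hy' hz' hyz).cons a

lemma sorted_triple_sublist : ∀ (L : List ℕ), L.Pairwise (· < ·) →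
    ∀ {x y z : ℕ}, x ∈ L → y ∈ L → z ∈ L → x < y → y < z → [x, y, z].Sublist L := by
  intro L
  induction L with
  | nil => intro _ x y z hx; simp at hx
  | cons a t ih =>
    intro hs x y z hx hy hz hxy hyz
    have hs' := List.pairwise_cons.mp hs
    rcases List.mem_cons.mp hx with rfl | hx'
    · have hy' : y ∈ t := by
        rcases List.mem_cons.mp hy with rfl | h
        · omega
        · exact h
      have hz' : z ∈ t := by
        rcases List.mem_cons.mp hz with rfl | h
        · omega
        · exact h
      exact (sorted_pair_sublist t hs'.2 hy' hz' hyz).cons₂ x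
    · have hy' : y ∈ t := by
        rcases List.mem_cons.mp hy with rfl | h
        · exact absurd (hs'.1 x hx') (by omega)
        · exact h
      have hz' : z ∈ t := by
        rcases List.mem_cons.mp hz with rfl | h
        · exact absurd (hs'.1 x hx') (by omega)
        · exact h
      exact (ih hs'.2 hx' hy' hz' hxy hyz).cons a


open Finset

lemma sort_head_min' (s : Finset ℕ) (h : s.Nonempty) :
    ∃ t, s.sort (· ≤ ·) = s.min' h :: t := by
  cases hs : s.sort (· ≤ ·) with
  | nil =>
    exfalso
    have hl := Finset.length_sort (α := ℕ) (· ≤ ·) (s := s)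
    rw [hs] at hl
    simp only [List.length_nil] at hl
    exact h.ne_empty (Finset.card_eq_zero.mp hl.symm)
  | cons a t =>
    refine ⟨t, ?_⟩
    have ha : a ∈ s := by
      rw [← Finset.mem_sort (α := ℕ) (· ≤ ·) (s := s), hs]; simp
    have hsort := Finset.pairwise_sort s (· ≤ ·)
    rw [hs] at hsort
    have hle : ∀ b ∈ s, a ≤ b := by
      intro b hb
      rw [← Finset.mem_sort (α := ℕ) (· ≤ ·) (s := s), hs] at hb
      rcases List.mem_cons.mp hb with rfl | hb'
      · exact le_rfl
      · exact (List.pairwise_cons.mp hsort).1 b hb'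
    have : s.min' h = a := le_antisymm (s.min'_le a ha) (Finset.le_min' s h a hle)
    rw [this]


lemma sort_concat_max' (s : Finset ℕ) (h : s.Nonempty) :
    ∃ t, s.sort (· ≤ ·) = t ++ [s.max' h] := by
  rcases List.eq_nil_or_concat' (s.sort (· ≤ ·)) with hs | ⟨t, b, hs⟩
  · exfalso
    have hl := Finset.length_sort (α := ℕ) (· ≤ ·) (s := s)
    rw [hs] at hl
    simp only [List.length_nil] at hl
    exact h.ne_empty (Finset.card_eq_zero.mp hl.symm)
  · refine ⟨t, ?_⟩
    have hb : b ∈ s := by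
      rw [← Finset.mem_sort (α := ℕ) (· ≤ ·) (s := s), hs]; simp
    have hsort := Finset.pairwise_sort s (· ≤ ·)
    rw [hs] at hsort
    have hle : ∀ c ∈ s, c ≤ b := by
      intro c hc
      rw [← Finset.mem_sort (α := ℕ) (· ≤ ·) (s := s), hs] at hc
      rcases List.mem_append.mp hc with hc' | hc'
      · have := (List.pairwise_append.mp hsort).2.2
        exact this c hc' b (by simp)
      · simp at hc'; omega
    have : s.max' h = b := le_antisymm (Finset.max'_le s h b hle) (s.le_max' b hb)
    rw [this]
    exact hs

/-- The ground line for a core `C`. -/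
def line (m : ℕ) (C : Finset ℕ) : Finset ℕ := Finset.Icc 1 m \ C

lemma series_eq (m : ℕ) (τ : Finset ℕ → Bool) (C : Finset ℕ) :
    series m τ C = ((line m C).sort (· ≤ ·)).map fun x => τ (insert x C) := rfl

lemma three_point {m : ℕ} {τ : Finset ℕ → Bool} {C : Finset ℕ}
    (h : signChanges (series m τ C) ≤ 1)
    {x y z : ℕ} (hx : x ∈ line m C) (hy : y ∈ line m C) (hz : z ∈ line m C)
    (hxy : x < y) (hyz : y < z) (hxz : τ (insert x C) = τ (insert z C)) :
    τ (insert y C) = τ (insert x C) := by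
  by_contra hne
  have hsub : ([x, y, z].map fun w => τ (insert w C)).Sublist (series m τ C) := by
    rw [series_eq]
    exact List.Sublist.map _ (sorted_triple_sublist _ ((Finset.sortedLT_sort _).pairwise)
      ((Finset.mem_sort _).mpr hx) ((Finset.mem_sort _).mpr hy)
      ((Finset.mem_sort _).mpr hz) hxy hyz)
  have h2 := sc_three (a := τ (insert x C)) (b := τ (insert y C)) (c := τ (insert z C))
    (fun hc => hne hc.symm) (fun hc => hne (hxz ▸ hc)) hsub
  omega

lemma series_head? {m : ℕ} {τ : Finset ℕ → Bool} {C : Finset ℕ} (h : (line m C).Nonempty) :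
    (series m τ C).head? = some (τ (insert ((line m C).min' h) C)) := by
  obtain ⟨t, ht⟩ := sort_head_min' _ h
  rw [series_eq, ht]
  rfl

lemma series_getLast? {m : ℕ} {τ : Finset ℕ → Bool} {C : Finset ℕ} (h : (line m C).Nonempty) :
    (series m τ C).getLast? = some (τ (insert ((line m C).max' h) C)) := by
  obtain ⟨t, ht⟩ := sort_concat_max' _ h
  rw [series_eq, ht, List.map_append]
  exact List.getLast?_concat

lemma rightAligned_iff {m : ℕ} {τ : Finset ℕ → Bool} {C : Finset ℕ}
    (h : (line m C).Nonempty) :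
    RightAligned (series m τ C) ↔
      τ (insert ((line m C).min' h) C) = false ∧
      τ (insert ((line m C).max' h) C) = true := by
  rw [RightAligned, series_head? h, series_getLast? h]
  constructor
  · rintro ⟨h1, h2⟩
    exact ⟨by simpa using h1, by simpa using h2⟩
  · rintro ⟨h1, h2⟩
    rw [h1, h2]
    exact ⟨rfl, rfl⟩

/-! ### Basic objects: Rt, Pfin, lines, families -/

/-- `Rt m τ B x`: the series of `B` at `x` is right-aligned. -/
def Rt (m : ℕ) (τ : Finset ℕ → Bool) (B : Finset ℕ) (x : ℕ) : Prop :=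
  RightAligned (series m τ (B.erase x))

/-- The finite set of `+`-subsets. -/
def Pfin (m : ℕ) (τ : Finset ℕ → Bool) : Finset (Finset ℕ) :=
  (Finset.Icc 1 m).powerset.filter fun A => τ A = true

lemma mem_Pfin {m : ℕ} {τ : Finset ℕ → Bool} {A : Finset ℕ} :
    A ∈ Pfin m τ ↔ A ⊆ Finset.Icc 1 m ∧ τ A = true := by
  simp [Pfin]

lemma plusCount_eq {m d : ℕ} {τ : Finset ℕ → Bool} (H : IsCoSignotope m d τ) :
    plusCount τ = (Pfin m τ).card := by
  rw [plusCount]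
  have hset : {A : Finset ℕ | τ A = true} = ↑(Pfin m τ) := by
    ext A
    simp only [Set.mem_setOf_eq, Finset.coe_filter, Pfin, Finset.mem_powerset,
      Set.mem_setOf_eq, Finset.mem_coe, Finset.mem_filter]
    exact ⟨fun h => ⟨(H.1 A h).1, h⟩, fun h => h.2⟩
  rw [hset, Set.ncard_coe_finset]

lemma mem_line_iff {m w : ℕ} {C : Finset ℕ} :
    w ∈ line m C ↔ (1 ≤ w ∧ w ≤ m ∧ w ∉ C) := by
  simp only [line, Finset.mem_sdiff, Finset.mem_Icc]
  tauto

section Facts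

variable {m d p : ℕ} {τ : Finset ℕ → Bool} {B B' : Finset ℕ} {x y z u v : ℕ}

lemma Bsub (H : IsCoSignotope m d τ) (hB : τ B = true) : B ⊆ Finset.Icc 1 m := (H.1 B hB).1

lemma Bcard (H : IsCoSignotope m d τ) (hB : τ B = true) : B.card = d := (H.1 B hB).2

lemma self_mem_line (H : IsCoSignotope m d τ) (hB : τ B = true) (hx : x ∈ B) :
    x ∈ line m (B.erase x) := by
  have := Bsub H hB hx
  rw [Finset.mem_Icc] at this
  exact mem_line_iff.mpr ⟨this.1, this.2, Finset.notMem_erase x B⟩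

lemma sc_le (H : IsCoSignotope m d τ) (hB : τ B = true) (hx : x ∈ B) :
    signChanges (series m τ (B.erase x)) ≤ 1 :=
  H.2 B (H.1 B hB).1 (H.1 B hB).2 x hx

lemma insert_injOn_line {C : Finset ℕ} {w w' : ℕ} (hw : w ∉ C) (hw' : w' ∉ C)
    (h : insert w C = insert w' C) : w = w' := by
  have : w ∈ insert w' C := h ▸ Finset.mem_insert_self w C
  rcases Finset.mem_insert.mp this with h' | h'
  · exact h'
  · exact absurd h' hw

lemma card_sdiff_inter (s t : Finset ℕ) : (s \ t).card + (s ∩ t).card = s.card := by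
  rw [← Finset.sdiff_inter_self_left]
  exact Finset.card_sdiff_add_card_eq_card (Finset.inter_subset_left)

lemma card_line {C : Finset ℕ} (hC : C ⊆ Finset.Icc 1 m) :
    (line m C).card + C.card = m := by
  have := card_sdiff_inter (Finset.Icc 1 m) C
  rw [Finset.inter_eq_right.mpr hC] at this
  rw [line, this]
  simp

/-! ### families -/

/-- family of sets `insert w C` for `w ∈ S \ C`. -/
def famI (S C : Finset ℕ) : Finset (Finset ℕ) :=
  (S.filter (· ∉ C)).image fun w => insert w C

lemma mem_famI {S C A : Finset ℕ} :
    A ∈ famI S C ↔ ∃ w, w ∈ S ∧ w ∉ C ∧ A = insert w C := by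
  simp only [famI, Finset.mem_image, Finset.mem_filter]
  constructor
  · rintro ⟨w, ⟨h1, h2⟩, rfl⟩; exact ⟨w, h1, h2, rfl⟩
  · rintro ⟨w, h1, h2, rfl⟩; exact ⟨w, ⟨h1, h2⟩, rfl⟩

lemma card_famI {S C : Finset ℕ} : (famI S C).card + (S ∩ C).card = S.card := by
  have h1 : (famI S C).card = (S.filter (· ∉ C)).card := by
    apply Finset.card_image_of_injOn
    intro w hw w' hw' h
    simp only [Finset.coe_filter, Set.mem_setOf_eq] at hw hw'
    exact insert_injOn_line hw.2 hw'.2 h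
  rw [h1, ← Finset.sdiff_eq_filter]
  exact card_sdiff_inter S C

lemma famI_subset_Pfin {S C : Finset ℕ} (hC : C ⊆ Finset.Icc 1 m)
    (hS : S ⊆ Finset.Icc 1 m)
    (htrue : ∀ w ∈ S, w ∉ C → τ (insert w C) = true) :
    famI S C ⊆ Pfin m τ := by
  intro A hA
  obtain ⟨w, h1, h2, rfl⟩ := mem_famI.mp hA
  exact mem_Pfin.mpr ⟨Finset.insert_subset (hS h1) hC, htrue w h1 h2⟩

lemma famI_common {S S' C C' A : Finset ℕ} (hcc : C.card = C'.card) (hne : C ≠ C')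
    (hA : A ∈ famI S C) (hA' : A ∈ famI S' C') : A = C ∪ C' := by
  obtain ⟨w, _, hw, rfl⟩ := mem_famI.mp hA
  obtain ⟨w', _, hw', hEq⟩ := mem_famI.mp hA'
  have hsub : C ∪ C' ⊆ insert w C := by
    apply Finset.union_subset (Finset.subset_insert w C)
    rw [hEq]
    exact Finset.subset_insert w' C'
  have hlt : C.card < (C ∪ C').card := by
    apply Finset.card_lt_card
    constructor
    · exact Finset.subset_union_left
    · intro hsub'
      have : C' ⊆ C := Finset.union_subset_iff.mp hsub' |>.2
      exact hne ((Finset.eq_of_subset_of_card_le this (le_of_eq hcc)).symm)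
  have hcard : (insert w C).card ≤ (C ∪ C').card := by
    rw [Finset.card_insert_of_notMem hw]
    omega
  exact (Finset.eq_of_subset_of_card_le hsub hcard).symm

lemma famI_inter_card_le_one {S S' C C' : Finset ℕ} (hcc : C.card = C'.card) (hne : C ≠ C') :
    (famI S C ∩ famI S' C').card ≤ 1 := by
  rw [Finset.card_le_one]
  intro a ha b hb
  rw [Finset.mem_inter] at ha hb
  rw [famI_common hcc hne ha.1 ha.2, famI_common hcc hne hb.1 hb.2]

lemma fams_card_bound {F G : Finset (Finset ℕ)} (hF : F ⊆ Pfin m τ) (hG : G ⊆ Pfin m τ)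
    (Hp' : (Pfin m τ).card ≤ p) : F.card + G.card ≤ p + (F ∩ G).card := by
  have h1 := Finset.card_union_add_card_inter F G
  have h2 : (F ∪ G).card ≤ p :=
    le_trans (Finset.card_le_card (Finset.union_subset hF hG)) Hp'
  omega

end Facts

section Facts2

variable {m d p : ℕ} {τ : Finset ℕ → Bool} {B B' : Finset ℕ} {x y z u v : ℕ}

lemma elem_bounds (H : IsCoSignotope m d τ) (hB : τ B = true) (hx : x ∈ B) :
    1 ≤ x ∧ x ≤ m := Finset.mem_Icc.mp (Bsub H hB hx)

lemma erase_subset_Icc (H : IsCoSignotope m d τ) (hB : τ B = true) :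
    B.erase x ⊆ Finset.Icc 1 m := (Finset.erase_subset x B).trans (Bsub H hB)

lemma d_pos (H : IsCoSignotope m d τ) (hB : τ B = true) (hx : x ∈ B) : 1 ≤ d := by
  have := Bcard H hB
  have := Finset.card_pos.mpr ⟨x, hx⟩
  omega

lemma card_erase' (H : IsCoSignotope m d τ) (hB : τ B = true) (hx : x ∈ B) :
    (B.erase x).card + 1 = d := by
  rw [Finset.card_erase_of_mem hx, Bcard H hB]
  have := d_pos H hB hx
  omega

lemma exists_false_in_line (H : IsCoSignotope m d τ) (Hp : plusCount τ ≤ p)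
    (hpd : p + d ≤ m) (hB : τ B = true) (hx : x ∈ B) :
    ∃ w ∈ line m (B.erase x), τ (insert w (B.erase x)) = false := by
  by_contra hall
  push_neg at hall
  have htrue : ∀ w ∈ line m (B.erase x), τ (insert w (B.erase x)) = true := by
    intro w hw
    cases h : τ (insert w (B.erase x))
    · exact absurd h (hall w hw)
    · rfl
  have hsub : famI (line m (B.erase x)) (B.erase x) ⊆ Pfin m τ :=
    famI_subset_Pfin (erase_subset_Icc H hB)
      (fun w hw => (Finset.mem_sdiff.mp hw).1) (fun w hw _ => htrue w hw)
  have hcount : (famI (line m (B.erase x)) (B.erase x)).card ≤ p :=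
    le_trans (Finset.card_le_card hsub) (le_trans (le_of_eq (plusCount_eq H).symm) Hp)
  have h1 := card_famI (S := line m (B.erase x)) (C := B.erase x)
  have h2 : line m (B.erase x) ∩ B.erase x = ∅ := by
    rw [line]
    exact Finset.sdiff_inter_self _ _
  have h3 := card_line (m := m) (erase_subset_Icc H hB (x := x))
  have h4 := card_erase' H hB hx
  rw [h2] at h1
  simp only [Finset.card_empty] at h1
  omega

lemma Rt_ge_true (H : IsCoSignotope m d τ) (hB : τ B = true) (hx : x ∈ B)
    (hRt : Rt m τ B x) :
    ∀ w ∈ line m (B.erase x), x ≤ w → τ (insert w (B.erase x)) = true := by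
  intro w hw hxw
  have hne : (line m (B.erase x)).Nonempty := ⟨x, self_mem_line H hB hx⟩
  obtain ⟨_, hhi⟩ := (rightAligned_iff hne).mp hRt
  have hxt : τ (insert x (B.erase x)) = true := by
    rw [Finset.insert_erase hx]; exact hB
  have hwhi : w ≤ (line m (B.erase x)).max' hne := Finset.le_max' _ w hw
  rcases eq_or_lt_of_le hxw with rfl | hxw'
  · exact hxt
  rcases eq_or_lt_of_le hwhi with heq | hwhi'
  · rw [heq]; exact hhi
  · have h3 := three_point (sc_le H hB hx) (self_mem_line H hB hx) hw
      (Finset.max'_mem _ hne) hxw' hwhi' (by rw [hxt, hhi])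
    rw [h3, hxt]

lemma notRt_heads (H : IsCoSignotope m d τ) (Hp : plusCount τ ≤ p)
    (hpd : p + d ≤ m) (hB : τ B = true) (hx : x ∈ B) (hnot : ¬ Rt m τ B x)
    (hne : (line m (B.erase x)).Nonempty) :
    τ (insert ((line m (B.erase x)).min' hne) (B.erase x)) = true ∧
    τ (insert ((line m (B.erase x)).max' hne) (B.erase x)) = false := by
  obtain ⟨w, hw, hwf⟩ := exists_false_in_line H Hp hpd hB hx
  have hxt : τ (insert x (B.erase x)) = true := by
    rw [Finset.insert_erase hx]; exact hB
  have hxmem := self_mem_line H hB hx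
  have hlow : ∀ a ∈ line m (B.erase x), (line m (B.erase x)).min' hne ≤ a :=
    fun a ha => Finset.min'_le _ a ha
  have hhigh : ∀ a ∈ line m (B.erase x), a ≤ (line m (B.erase x)).max' hne :=
    fun a ha => Finset.le_max' _ a ha
  have hhi : τ (insert ((line m (B.erase x)).max' hne) (B.erase x)) = false := by
    cases hh : τ (insert ((line m (B.erase x)).max' hne) (B.erase x))
    · rfl
    · exfalso
      cases hl : τ (insert ((line m (B.erase x)).min' hne) (B.erase x))
      · exact hnot ((rightAligned_iff hne).mpr ⟨hl, hh⟩)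
      · -- all entries true, contradicting hwf
        rcases eq_or_lt_of_le (hlow w hw) with heq | hlt
        · rw [heq] at hl; rw [hl] at hwf; exact Bool.noConfusion hwf
        · rcases eq_or_lt_of_le (hhigh w hw) with heq | hlt2
          · rw [heq] at hwf; rw [hwf] at hh; exact Bool.noConfusion hh
          · have h3 := three_point (sc_le H hB hx) (Finset.min'_mem _ hne) hw
              (Finset.max'_mem _ hne) hlt hlt2 (by rw [hl, hh])
            rw [hl] at h3; rw [h3] at hwf; exact Bool.noConfusion hwf
  refine ⟨?_, hhi⟩
  cases hl : τ (insert ((line m (B.erase x)).min' hne) (B.erase x))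
  · exfalso
    -- τ at x is true but lo and hi are false
    have hxlo : x ≠ (line m (B.erase x)).min' hne := by
      intro h; rw [← h] at hl; rw [hxt] at hl; exact Bool.noConfusion hl
    have hxhi : x ≠ (line m (B.erase x)).max' hne := by
      intro h; rw [← h] at hhi; rw [hxt] at hhi; exact Bool.noConfusion hhi
    have h3 := three_point (sc_le H hB hx) (Finset.min'_mem _ hne) hxmem
      (Finset.max'_mem _ hne)
      (lt_of_le_of_ne (hlow x hxmem) (fun h => hxlo h.symm))
      (lt_of_le_of_ne (hhigh x hxmem) hxhi) (by rw [hl, hhi])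
    rw [hl] at h3; rw [h3] at hxt; exact Bool.noConfusion hxt
  · rfl

lemma notRt_le_true (H : IsCoSignotope m d τ) (Hp : plusCount τ ≤ p)
    (hpd : p + d ≤ m) (hB : τ B = true) (hx : x ∈ B) (hnot : ¬ Rt m τ B x) :
    ∀ w ∈ line m (B.erase x), w ≤ x → τ (insert w (B.erase x)) = true := by
  intro w hw hwx
  have hne : (line m (B.erase x)).Nonempty := ⟨x, self_mem_line H hB hx⟩
  obtain ⟨hlo, _⟩ := notRt_heads H Hp hpd hB hx hnot hne
  have hxt : τ (insert x (B.erase x)) = true := by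
    rw [Finset.insert_erase hx]; exact hB
  rcases eq_or_lt_of_le hwx with rfl | hwx'
  · exact hxt
  rcases eq_or_lt_of_le (Finset.min'_le _ w hw) with heq | hlt
  · rw [← heq]; exact hlo
  · have h3 := three_point (sc_le H hB hx) (Finset.min'_mem _ hne) hw
      (self_mem_line H hB hx) hlt hwx' (by rw [hlo, hxt])
    rw [h3, hlo]

end Facts2

section Facts3

variable {m d p : ℕ} {τ : Finset ℕ → Bool} {B B' : Finset ℕ} {x y z u v : ℕ}

lemma inter_insert_card_L (hx : x ∈ B) (h1 : 1 ≤ x) :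
    (B.erase x ∩ Finset.Icc 1 x).card + 1 = (B ∩ Finset.Icc 1 x).card := by
  have hins : B ∩ Finset.Icc 1 x = insert x (B.erase x ∩ Finset.Icc 1 x) := by
    ext a
    simp only [Finset.mem_inter, Finset.mem_insert, Finset.mem_erase, Finset.mem_Icc]
    constructor
    · rintro ⟨haB, h1a, hax⟩
      by_cases hax' : a = x
      · left; exact hax'
      · right; exact ⟨⟨hax', haB⟩, h1a, hax⟩
    · rintro (rfl | ⟨⟨_, haB⟩, h⟩)
      · exact ⟨hx, h1, le_rfl⟩
      · exact ⟨haB, h⟩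
  rw [hins, Finset.card_insert_of_notMem
    (fun hmem => Finset.notMem_erase x B (Finset.mem_inter.mp hmem).1)]

lemma inter_insert_card_R (hx : x ∈ B) (hm : x ≤ m) :
    (B.erase x ∩ Finset.Icc x m).card + 1 = (B ∩ Finset.Icc x m).card := by
  have hins : B ∩ Finset.Icc x m = insert x (B.erase x ∩ Finset.Icc x m) := by
    ext a
    simp only [Finset.mem_inter, Finset.mem_insert, Finset.mem_erase, Finset.mem_Icc]
    constructor
    · rintro ⟨haB, h1a, hax⟩
      by_cases hax' : a = x
      · left; exact hax'
      · right; exact ⟨⟨hax', haB⟩, h1a, hax⟩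
    · rintro (rfl | ⟨⟨_, haB⟩, h⟩)
      · exact ⟨hx, le_rfl, hm⟩
      · exact ⟨haB, h⟩
  rw [hins, Finset.card_insert_of_notMem
    (fun hmem => Finset.notMem_erase x B (Finset.mem_inter.mp hmem).1)]

/-- The workhorse counting inequality. -/
lemma MI (H : IsCoSignotope m d τ) (Hp : plusCount τ ≤ p) (hpd : p + d ≤ m)
    (hB : τ B = true) (hB' : τ B' = true) (hx : x ∈ B) (hy : y ∈ B')
    (hLx : ¬ Rt m τ B x) (hRy : Rt m τ B' y) (hcore : B.erase x ≠ B'.erase y) :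
    x + m + 2 ≤ p + (B ∩ Finset.Icc 1 x).card + (B' ∩ Finset.Icc y m).card + y := by
  obtain ⟨hx1, hxm⟩ := elem_bounds H hB hx
  obtain ⟨hy1, hym⟩ := elem_bounds H hB' hy
  have hLsub : famI (Finset.Icc 1 x) (B.erase x) ⊆ Pfin m τ := by
    apply famI_subset_Pfin (erase_subset_Icc H hB)
      (Finset.Icc_subset_Icc le_rfl hxm)
    intro w hw hwC
    rw [Finset.mem_Icc] at hw
    exact notRt_le_true H Hp hpd hB hx hLx w
      (mem_line_iff.mpr ⟨hw.1, le_trans hw.2 hxm, hwC⟩) hw.2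
  have hRsub : famI (Finset.Icc y m) (B'.erase y) ⊆ Pfin m τ := by
    apply famI_subset_Pfin (erase_subset_Icc H hB')
      (Finset.Icc_subset_Icc hy1 le_rfl)
    intro w hw hwC
    rw [Finset.mem_Icc] at hw
    exact Rt_ge_true H hB' hy hRy w
      (mem_line_iff.mpr ⟨le_trans hy1 hw.1, hw.2, hwC⟩) hw.1
  have hbound := fams_card_bound hLsub hRsub
    (le_trans (le_of_eq (plusCount_eq H).symm) Hp)
  have hint : (famI (Finset.Icc 1 x) (B.erase x) ∩ famI (Finset.Icc y m) (B'.erase y)).card ≤ 1 := by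
    apply famI_inter_card_le_one ?_ hcore
    rw [Finset.card_erase_of_mem hx, Finset.card_erase_of_mem hy, Bcard H hB, Bcard H hB']
  have e1 := card_famI (S := Finset.Icc 1 x) (C := B.erase x)
  have e2 := card_famI (S := Finset.Icc y m) (C := B'.erase y)
  rw [Finset.inter_comm] at e1 e2
  have i1 := inter_insert_card_L hx hx1
  have i2 := inter_insert_card_R hy hym
  have c1 : (Finset.Icc 1 x).card = x := by rw [Nat.card_Icc]; omega
  have c2 : (Finset.Icc y m).card = m + 1 - y := by rw [Nat.card_Icc]
  omega

lemma F4a (H : IsCoSignotope m d τ) (Hp : plusCount τ ≤ p) (hpd : p + d ≤ m)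
    (hB : τ B = true) (hx : x ∈ B) (hy : y ∈ B)
    (hLx : ¬ Rt m τ B x) (hRy : Rt m τ B y) (hxy : x ≠ y) : x < y := by
  by_contra hcon
  have hyx : y < x := lt_of_le_of_ne (not_lt.mp hcon) (fun h => hxy h.symm)
  obtain ⟨hx1, hxm⟩ := elem_bounds H hB hx
  obtain ⟨hy1, hym⟩ := elem_bounds H hB hy
  have hcore' : B.erase x ≠ B.erase y := by
    intro he
    have hxe : x ∈ B.erase y := Finset.mem_erase.mpr ⟨hxy, hx⟩
    rw [← he] at hxe
    exact Finset.notMem_erase x B hxe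
  have hmi := MI H Hp hpd hB hB hx hy hLx hRy hcore'
  have hunion : (B ∩ Finset.Icc 1 x) ∪ (B ∩ Finset.Icc y m) = B := by
    ext a
    simp only [Finset.mem_union, Finset.mem_inter, Finset.mem_Icc]
    constructor
    · rintro (⟨h, _⟩ | ⟨h, _⟩) <;> exact h
    · intro ha
      have := Finset.mem_Icc.mp (Bsub H hB ha)
      by_cases hax : a ≤ x
      · exact Or.inl ⟨ha, this.1, hax⟩
      · exact Or.inr ⟨ha, by omega, this.2⟩
  have hii : (B ∩ Finset.Icc 1 x) ∩ (B ∩ Finset.Icc y m) = B ∩ Finset.Icc y x := by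
    ext a
    simp only [Finset.mem_inter, Finset.mem_Icc]
    constructor
    · rintro ⟨⟨h, h1, h2⟩, ⟨_, h3, h4⟩⟩
      exact ⟨h, h3, h2⟩
    · rintro ⟨h, h1, h2⟩
      have := Finset.mem_Icc.mp (Bsub H hB h)
      exact ⟨⟨h, this.1, h2⟩, ⟨h, h1, this.2⟩⟩
  have hcui := Finset.card_union_add_card_inter (B ∩ Finset.Icc 1 x) (B ∩ Finset.Icc y m)
  rw [hunion, hii] at hcui
  have hle : (B ∩ Finset.Icc y x).card ≤ x - y + 1 := by
    refine le_trans (Finset.card_le_card Finset.inter_subset_right) ?_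
    rw [Nat.card_Icc]
    omega
  have hd := Bcard H hB
  omega

lemma F4b (H : IsCoSignotope m d τ) (Hp : plusCount τ ≤ p) (hpd : p + d ≤ m)
    (hB : τ B = true) (hx : x ∈ B) (hy : y ∈ B)
    (hLx : ¬ Rt m τ B x) (hRy : Rt m τ B y) (hxy : x < y) :
    m + 2 + x + (B ∩ Finset.Ioo x y).card ≤ p + d + y := by
  obtain ⟨hx1, hxm⟩ := elem_bounds H hB hx
  obtain ⟨hy1, hym⟩ := elem_bounds H hB hy
  have hcore' : B.erase x ≠ B.erase y := by
    intro he
    have hxe : x ∈ B.erase y := Finset.mem_erase.mpr ⟨by omega, hx⟩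
    rw [← he] at hxe
    exact Finset.notMem_erase x B hxe
  have hmi := MI H Hp hpd hB hB hx hy hLx hRy hcore'
  have hd12 : Disjoint (B ∩ Finset.Icc 1 x) (B ∩ Finset.Icc y m) := by
    rw [Finset.disjoint_left]
    intro a ha hb
    simp only [Finset.mem_inter, Finset.mem_Icc] at ha hb
    omega
  have hd3 : Disjoint ((B ∩ Finset.Icc 1 x) ∪ (B ∩ Finset.Icc y m)) (B ∩ Finset.Ioo x y) := by
    rw [Finset.disjoint_left]
    intro a ha hb
    simp only [Finset.mem_union, Finset.mem_inter, Finset.mem_Icc, Finset.mem_Ioo] at ha hb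
    omega
  have hunion : ((B ∩ Finset.Icc 1 x) ∪ (B ∩ Finset.Icc y m)) ∪ (B ∩ Finset.Ioo x y) = B := by
    ext a
    simp only [Finset.mem_union, Finset.mem_inter, Finset.mem_Icc, Finset.mem_Ioo]
    constructor
    · rintro ((⟨h, _⟩ | ⟨h, _⟩) | ⟨h, _⟩) <;> exact h
    · intro ha
      have := Finset.mem_Icc.mp (Bsub H hB ha)
      by_cases hax : a ≤ x
      · exact Or.inl (Or.inl ⟨ha, this.1, hax⟩)
      · by_cases hay : y ≤ a
        · exact Or.inl (Or.inr ⟨ha, hay, this.2⟩)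
        · exact Or.inr ⟨ha, by omega, by omega⟩
  have hc1 := Finset.card_union_of_disjoint hd12
  have hc2 := Finset.card_union_of_disjoint hd3
  rw [hunion, hc1] at hc2
  have hd := Bcard H hB
  omega

lemma F6R (H : IsCoSignotope m d τ) (Hp : plusCount τ ≤ p)
    (hB : τ B = true) (hy : y ∈ B) (hRy : Rt m τ B y) :
    m + 2 ≤ p + d + y := by
  obtain ⟨hy1, hym⟩ := elem_bounds H hB hy
  have hRsub : famI (Finset.Icc y m) (B.erase y) ⊆ Pfin m τ := by
    apply famI_subset_Pfin (erase_subset_Icc H hB)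
      (Finset.Icc_subset_Icc hy1 le_rfl)
    intro w hw hwC
    rw [Finset.mem_Icc] at hw
    exact Rt_ge_true H hB hy hRy w
      (mem_line_iff.mpr ⟨le_trans hy1 hw.1, hw.2, hwC⟩) hw.1
  have hcount : (famI (Finset.Icc y m) (B.erase y)).card ≤ p :=
    le_trans (Finset.card_le_card hRsub) (le_trans (le_of_eq (plusCount_eq H).symm) Hp)
  have e2 := card_famI (S := Finset.Icc y m) (C := B.erase y)
  have hic : (Finset.Icc y m ∩ B.erase y).card ≤ d - 1 := by
    refine le_trans (Finset.card_le_card Finset.inter_subset_right) ?_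
    rw [Finset.card_erase_of_mem hy, Bcard H hB]
  have c2 : (Finset.Icc y m).card = m + 1 - y := by rw [Nat.card_Icc]
  have hd := d_pos H hB hy
  omega

lemma F6L (H : IsCoSignotope m d τ) (Hp : plusCount τ ≤ p) (hpd : p + d ≤ m)
    (hB : τ B = true) (hx : x ∈ B) (hLx : ¬ Rt m τ B x) :
    x + 1 ≤ p + d := by
  obtain ⟨hx1, hxm⟩ := elem_bounds H hB hx
  have hLsub : famI (Finset.Icc 1 x) (B.erase x) ⊆ Pfin m τ := by
    apply famI_subset_Pfin (erase_subset_Icc H hB)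
      (Finset.Icc_subset_Icc le_rfl hxm)
    intro w hw hwC
    rw [Finset.mem_Icc] at hw
    exact notRt_le_true H Hp hpd hB hx hLx w
      (mem_line_iff.mpr ⟨hw.1, le_trans hw.2 hxm, hwC⟩) hw.2
  have hcount : (famI (Finset.Icc 1 x) (B.erase x)).card ≤ p :=
    le_trans (Finset.card_le_card hLsub) (le_trans (le_of_eq (plusCount_eq H).symm) Hp)
  have e1 := card_famI (S := Finset.Icc 1 x) (C := B.erase x)
  have hic : (Finset.Icc 1 x ∩ B.erase x).card ≤ d - 1 := by
    refine le_trans (Finset.card_le_card Finset.inter_subset_right) ?_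
    rw [Finset.card_erase_of_mem hx, Bcard H hB]
  have c1 : (Finset.Icc 1 x).card = x := by rw [Nat.card_Icc]; omega
  have hd := d_pos H hB hx
  omega

end Facts3

section Facts4

variable {m d p : ℕ} {τ : Finset ℕ → Bool} {B B' : Finset ℕ} {x y z u v : ℕ}

lemma F5aux (H : IsCoSignotope m d τ) (Hp : plusCount τ ≤ p) (hpd : p + d ≤ m)
    (hB : τ B = true) (hB' : τ B' = true) (hu : u ∈ B) (hv : v ∈ B')
    (hcore : B.erase u = B'.erase v) (hz : z ∈ B) (hzu : z ≠ u)
    (hRz : Rt m τ B z) (hnR : ¬ Rt m τ B' z) : False := by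
  by_cases hBB' : B = B'
  · subst hBB'; exact hnR hRz
  have huv : u ≠ v := by
    rintro rfl
    exact hBB' (by rw [← Finset.insert_erase hu, hcore, Finset.insert_erase hv])
  have hvB : v ∉ B := by
    intro hvB
    have : v ∈ B.erase u := Finset.mem_erase.mpr ⟨fun h => huv h.symm, hvB⟩
    rw [hcore] at this
    exact Finset.notMem_erase v B' this
  have huB' : u ∉ B' := by
    intro huB'
    have : u ∈ B'.erase v := Finset.mem_erase.mpr ⟨huv, huB'⟩
    rw [← hcore] at this
    exact Finset.notMem_erase u B this
  have hzB' : z ∈ B' := by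
    have : z ∈ B.erase u := Finset.mem_erase.mpr ⟨hzu, hz⟩
    rw [hcore] at this
    exact Finset.mem_of_mem_erase this
  have hzv : z ≠ v := fun h => hvB (h ▸ hz)
  obtain ⟨hz1, hzm⟩ := elem_bounds H hB hz
  obtain ⟨hu1, hum⟩ := elem_bounds H hB hu
  obtain ⟨hv1, hvm⟩ := elem_bounds H hB' hv
  -- the two families
  have hRsub : famI (Finset.Icc z m) (B.erase z) ⊆ Pfin m τ := by
    apply famI_subset_Pfin (erase_subset_Icc H hB) (Finset.Icc_subset_Icc hz1 le_rfl)
    intro w hw hwC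
    rw [Finset.mem_Icc] at hw
    exact Rt_ge_true H hB hz hRz w
      (mem_line_iff.mpr ⟨le_trans hz1 hw.1, hw.2, hwC⟩) hw.1
  have hLsub : famI (Finset.Icc 1 z) (B'.erase z) ⊆ Pfin m τ := by
    apply famI_subset_Pfin (erase_subset_Icc H hB') (Finset.Icc_subset_Icc le_rfl hzm)
    intro w hw hwC
    rw [Finset.mem_Icc] at hw
    exact notRt_le_true H Hp hpd hB' hzB' hnR w
      (mem_line_iff.mpr ⟨hw.1, le_trans hw.2 hzm, hwC⟩) hw.2
  have hbound := fams_card_bound hRsub hLsub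
    (le_trans (le_of_eq (plusCount_eq H).symm) Hp)
  have hcz : B.erase z ≠ B'.erase z := by
    intro he
    exact hBB' (by rw [← Finset.insert_erase hz, he, Finset.insert_erase hzB'])
  have hint : (famI (Finset.Icc z m) (B.erase z) ∩ famI (Finset.Icc 1 z) (B'.erase z)).card ≤ 1 := by
    apply famI_inter_card_le_one ?_ hcz
    rw [Finset.card_erase_of_mem hz, Finset.card_erase_of_mem hzB', Bcard H hB, Bcard H hB']
  have e1 := card_famI (S := Finset.Icc z m) (C := B.erase z)
  have e2 := card_famI (S := Finset.Icc 1 z) (C := B'.erase z)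
  have c1 : (Finset.Icc z m).card = m + 1 - z := by rw [Nat.card_Icc]
  have c2 : (Finset.Icc 1 z).card = z := by rw [Nat.card_Icc]; omega
  -- decompositions of the two erased cores
  have hBz : B.erase z = insert u ((B.erase u).erase z) := by
    rw [Finset.erase_insert_of_ne (fun h => hzu h.symm) |>.symm, Finset.insert_erase hu]
  have hB'z : B'.erase z = insert v ((B.erase u).erase z) := by
    rw [Finset.erase_insert_of_ne (fun h => hzv h.symm) |>.symm, hcore, Finset.insert_erase hv]
  have hKcard : ((B.erase u).erase z).card + 2 = d := by
    rw [Finset.card_erase_of_mem (Finset.mem_erase.mpr ⟨hzu, hz⟩),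
      Finset.card_erase_of_mem hu, Bcard H hB]
    have hd := d_pos H hB hz
    have : 2 ≤ d := by
      have := Finset.one_lt_card.mpr ⟨z, hz, u, hu, hzu⟩
      rw [Bcard H hB] at this
      omega
    omega
  have hKsub : (B.erase u).erase z ⊆ Finset.Icc 1 m :=
    ((Finset.erase_subset _ _).trans (Finset.erase_subset _ _)).trans (Bsub H hB)
  have hpart : ((B.erase u).erase z ∩ Finset.Icc z m).card
      + ((B.erase u).erase z ∩ Finset.Icc 1 z).card = ((B.erase u).erase z).card := by
    have hdisj : Disjoint ((B.erase u).erase z ∩ Finset.Icc z m)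
        ((B.erase u).erase z ∩ Finset.Icc 1 z) := by
      rw [Finset.disjoint_left]
      intro a ha hb
      simp only [Finset.mem_inter, Finset.mem_erase, Finset.mem_Icc] at ha hb
      omega
    have hun : ((B.erase u).erase z ∩ Finset.Icc z m)
        ∪ ((B.erase u).erase z ∩ Finset.Icc 1 z) = (B.erase u).erase z := by
      ext a
      simp only [Finset.mem_union, Finset.mem_inter, Finset.mem_Icc]
      constructor
      · rintro (⟨h, _⟩ | ⟨h, _⟩) <;> exact h
      · intro ha
        have := Finset.mem_Icc.mp (hKsub ha)
        by_cases haz : z ≤ a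
        · exact Or.inl ⟨ha, haz, this.2⟩
        · exact Or.inr ⟨ha, this.1, by omega⟩
    have := Finset.card_union_of_disjoint hdisj
    rw [hun] at this
    omega
  have hiRle : (Finset.Icc z m ∩ B.erase z).card ≤ ((B.erase u).erase z ∩ Finset.Icc z m).card + 1 := by
    have hsub : Finset.Icc z m ∩ B.erase z ⊆ insert u ((B.erase u).erase z ∩ Finset.Icc z m) := by
      intro a ha
      rw [Finset.mem_inter, hBz] at ha
      rcases Finset.mem_insert.mp ha.2 with rfl | h
      · exact Finset.mem_insert_self _ _
      · exact Finset.mem_insert_of_mem (Finset.mem_inter.mpr ⟨h, ha.1⟩)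
    exact le_trans (Finset.card_le_card hsub) (Finset.card_insert_le _ _)
  have hiLle : (Finset.Icc 1 z ∩ B'.erase z).card ≤ ((B.erase u).erase z ∩ Finset.Icc 1 z).card + 1 := by
    have hsub : Finset.Icc 1 z ∩ B'.erase z ⊆ insert v ((B.erase u).erase z ∩ Finset.Icc 1 z) := by
      intro a ha
      rw [Finset.mem_inter, hB'z] at ha
      rcases Finset.mem_insert.mp ha.2 with rfl | h
      · exact Finset.mem_insert_self _ _
      · exact Finset.mem_insert_of_mem (Finset.mem_inter.mpr ⟨h, ha.1⟩)
    exact le_trans (Finset.card_le_card hsub) (Finset.card_insert_le _ _)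
  rcases Finset.eq_empty_or_nonempty
      (famI (Finset.Icc z m) (B.erase z) ∩ famI (Finset.Icc 1 z) (B'.erase z)) with hemp | ⟨X, hX⟩
  · have hzero : (famI (Finset.Icc z m) (B.erase z) ∩ famI (Finset.Icc 1 z) (B'.erase z)).card = 0 := by
      rw [hemp]; rfl
    omega
  · rw [Finset.mem_inter] at hX
    obtain ⟨w', hw'S, hw'C, hXR⟩ := mem_famI.mp hX.1
    obtain ⟨w, hwS, hwC, hXL⟩ := mem_famI.mp hX.2
    rw [Finset.mem_Icc] at hw'S hwS
    have huX : u ∈ X := by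
      rw [hXR]
      exact Finset.mem_insert_of_mem (Finset.mem_erase.mpr ⟨fun h => hzu h.symm, hu⟩)
    have huw : u = w := by
      rw [hXL] at huX
      rcases Finset.mem_insert.mp huX with h | h
      · exact h
      · exact absurd (Finset.mem_of_mem_erase h) huB'
    have hulz : u < z := lt_of_le_of_ne (huw ▸ hwS.2) (fun h => hzu h.symm)
    have hvX : v ∈ X := by
      rw [hXL]
      exact Finset.mem_insert_of_mem (Finset.mem_erase.mpr ⟨fun h => hzv h.symm, hv⟩)
    have hvw' : v = w' := by
      rw [hXR] at hvX
      rcases Finset.mem_insert.mp hvX with h | h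
      · exact h
      · exact absurd (Finset.mem_of_mem_erase h) hvB
    have hvgz : z < v := lt_of_le_of_ne (hvw' ▸ hw'S.1) hzv
    have hiReq : Finset.Icc z m ∩ B.erase z = (B.erase u).erase z ∩ Finset.Icc z m := by
      ext a
      rw [Finset.mem_inter, Finset.mem_inter, hBz, Finset.mem_insert]
      constructor
      · rintro ⟨haI, rfl | h⟩
        · exfalso
          rw [Finset.mem_Icc] at haI
          omega
        · exact ⟨h, haI⟩
      · rintro ⟨h, haI⟩
        exact ⟨haI, Or.inr h⟩
    have hiLeq : Finset.Icc 1 z ∩ B'.erase z = (B.erase u).erase z ∩ Finset.Icc 1 z := by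
      ext a
      rw [Finset.mem_inter, Finset.mem_inter, hB'z, Finset.mem_insert]
      constructor
      · rintro ⟨haI, rfl | h⟩
        · exfalso
          rw [Finset.mem_Icc] at haI
          omega
        · exact ⟨h, haI⟩
      · rintro ⟨h, haI⟩
        exact ⟨haI, Or.inr h⟩
    rw [hiReq] at e1
    rw [hiLeq] at e2
    omega

/-- Type stability: if `B` and `B'` agree off a single swap, common elements have the
same alignment type. -/
lemma F5 (H : IsCoSignotope m d τ) (Hp : plusCount τ ≤ p) (hpd : p + d ≤ m)
    (hB : τ B = true) (hB' : τ B' = true) (hu : u ∈ B) (hv : v ∈ B')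
    (hcore : B.erase u = B'.erase v) (hz : z ∈ B) (hzu : z ≠ u) (hzv : z ≠ v) :
    Rt m τ B z ↔ Rt m τ B' z := by
  have hzB' : z ∈ B' := by
    have : z ∈ B.erase u := Finset.mem_erase.mpr ⟨hzu, hz⟩
    rw [hcore] at this
    exact Finset.mem_of_mem_erase this
  constructor
  · intro hRz
    by_contra hnR
    exact F5aux H Hp hpd hB hB' hu hv hcore hz hzu hRz hnR
  · intro hRz
    by_contra hnR
    exact F5aux H Hp hpd hB' hB hv hu hcore.symm hzB' hzv hRz hnR

end Facts4

section Gamma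
open Classical

variable {ms mt d p : ℕ} {τ : Finset ℕ → Bool} {B : Finset ℕ} {x y : ℕ}

open Classical in
lemma gammaFun_image (ms mt : ℕ) (τ : Finset ℕ → Bool) (B : Finset ℕ) :
    gammaFun ms mt τ B = B.image (fun x => if Rt ms τ B x then x + mt - ms else x) := rfl

/-- Rt values: `g x + ms = x + mt` and `g x ≥ 2`. -/
lemma gup_R (H : IsCoSignotope ms d τ) (Hp : plusCount τ ≤ p)
    (ht : p + d ≤ mt) (hB : τ B = true) (hx : x ∈ B) (hRx : Rt ms τ B x) :
    (x + mt - ms) + ms = x + mt ∧ 2 ≤ x + mt - ms := by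
  have h6 := F6R H Hp hB hx hRx
  omega

lemma gup_L (H : IsCoSignotope ms d τ) (Hp : plusCount τ ≤ p) (hs : p + d ≤ ms)
    (ht : p + d ≤ mt) (hB : τ B = true) (hx : x ∈ B) (hLx : ¬ Rt ms τ B x) :
    1 ≤ x ∧ x + 1 ≤ mt := by
  have h6 := F6L H Hp hs hB hx hLx
  have := (elem_bounds H hB hx).1
  omega

lemma gup_mem_Icc (H : IsCoSignotope ms d τ) (Hp : plusCount τ ≤ p) (hs : p + d ≤ ms)
    (ht : p + d ≤ mt) (hB : τ B = true) (hx : x ∈ B) :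
    (if Rt ms τ B x then x + mt - ms else x) ∈ Finset.Icc 1 mt := by
  rw [Finset.mem_Icc]
  by_cases hR : Rt ms τ B x
  · rw [if_pos hR]
    have := gup_R H Hp ht hB hx hR
    have := (elem_bounds H hB hx).2
    omega
  · rw [if_neg hR]
    have := gup_L H Hp hs ht hB hx hR
    omega

lemma gup_strictMono (H : IsCoSignotope ms d τ) (Hp : plusCount τ ≤ p) (hs : p + d ≤ ms)
    (ht : p + d ≤ mt) (hB : τ B = true) (hx : x ∈ B) (hy : y ∈ B) (hxy : x < y) :
    (if Rt ms τ B x then x + mt - ms else x) < (if Rt ms τ B y then y + mt - ms else y) := by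
  by_cases hRx : Rt ms τ B x <;> by_cases hRy : Rt ms τ B y
  · rw [if_pos hRx, if_pos hRy]
    have h1 := gup_R H Hp ht hB hx hRx
    have h2 := gup_R H Hp ht hB hy hRy
    omega
  · exfalso
    have := F4a H Hp hs hB hy hx hRy hRx (by omega)
    omega
  · rw [if_neg hRx, if_pos hRy]
    have h1 := F4b H Hp hs hB hx hy hRx hRy hxy
    have h2 := gup_R H Hp ht hB hy hRy
    omega
  · rw [if_neg hRx, if_neg hRy]
    exact hxy

lemma gup_le_iff (H : IsCoSignotope ms d τ) (Hp : plusCount τ ≤ p) (hs : p + d ≤ ms)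
    (ht : p + d ≤ mt) (hB : τ B = true) (hx : x ∈ B) (hy : y ∈ B) :
    ((if Rt ms τ B x then x + mt - ms else x) ≤ (if Rt ms τ B y then y + mt - ms else y))
      ↔ x ≤ y := by
  constructor
  · intro h
    by_contra hcon
    have := gup_strictMono H Hp hs ht hB hy hx (by omega)
    omega
  · intro h
    rcases eq_or_lt_of_le h with rfl | h'
    · exact le_rfl
    · exact le_of_lt (gup_strictMono H Hp hs ht hB hx hy h')

lemma gup_injOn (H : IsCoSignotope ms d τ) (Hp : plusCount τ ≤ p) (hs : p + d ≤ ms)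
    (ht : p + d ≤ mt) (hB : τ B = true) (hx : x ∈ B) (hy : y ∈ B)
    (h : (if Rt ms τ B x then x + mt - ms else x) = (if Rt ms τ B y then y + mt - ms else y)) :
    x = y := by
  by_contra hne
  rcases lt_or_gt_of_ne hne with h' | h'
  · have := gup_strictMono H Hp hs ht hB hx hy h'; omega
  · have := gup_strictMono H Hp hs ht hB hy hx h'; omega

lemma gamma_card (H : IsCoSignotope ms d τ) (Hp : plusCount τ ≤ p) (hs : p + d ≤ ms)
    (ht : p + d ≤ mt) (hB : τ B = true) :
    (gammaFun ms mt τ B).card = d := by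
  rw [gammaFun_image]
  rw [Finset.card_image_of_injOn fun x hx y hy h => gup_injOn H Hp hs ht hB hx hy h]
  exact Bcard H hB

lemma gamma_subset (H : IsCoSignotope ms d τ) (Hp : plusCount τ ≤ p) (hs : p + d ≤ ms)
    (ht : p + d ≤ mt) (hB : τ B = true) :
    gammaFun ms mt τ B ⊆ Finset.Icc 1 mt := by
  rw [gammaFun_image]
  intro a ha
  obtain ⟨x, hx, rfl⟩ := Finset.mem_image.mp ha
  exact gup_mem_Icc H Hp hs ht hB hx

lemma gamma_erase (H : IsCoSignotope ms d τ) (Hp : plusCount τ ≤ p) (hs : p + d ≤ ms)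
    (ht : p + d ≤ mt) (hB : τ B = true) (hx : x ∈ B) :
    (gammaFun ms mt τ B).erase (if Rt ms τ B x then x + mt - ms else x)
      = (B.erase x).image (fun y => if Rt ms τ B y then y + mt - ms else y) := by
  ext a
  rw [Finset.mem_erase, gammaFun_image, Finset.mem_image, Finset.mem_image]
  constructor
  · rintro ⟨hne, y, hy, rfl⟩
    refine ⟨y, Finset.mem_erase.mpr ⟨?_, hy⟩, rfl⟩
    rintro rfl
    exact hne rfl
  · rintro ⟨y, hy, rfl⟩
    have hy' := Finset.mem_of_mem_erase hy
    refine ⟨?_, y, hy', rfl⟩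
    intro heq
    exact (Finset.mem_erase.mp hy).1 (gup_injOn H Hp hs ht hB hy' hx heq)

lemma gamma_pos (H : IsCoSignotope ms d τ) (Hp : plusCount τ ≤ p) (hs : p + d ≤ ms)
    (ht : p + d ≤ mt) (hB : τ B = true) (hx : x ∈ B) :
    ((gammaFun ms mt τ B) ∩ Finset.Icc 1 (if Rt ms τ B x then x + mt - ms else x)).card
      = (B ∩ Finset.Icc 1 x).card := by
  have hset : (gammaFun ms mt τ B) ∩ Finset.Icc 1 (if Rt ms τ B x then x + mt - ms else x)
      = (B ∩ Finset.Icc 1 x).image (fun y => if Rt ms τ B y then y + mt - ms else y) := by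
    ext a
    rw [Finset.mem_inter, gammaFun_image, Finset.mem_image, Finset.mem_image, Finset.mem_Icc]
    constructor
    · rintro ⟨⟨y, hy, rfl⟩, h1, h2⟩
      refine ⟨y, Finset.mem_inter.mpr ⟨hy, Finset.mem_Icc.mpr ⟨(elem_bounds H hB hy).1, ?_⟩⟩, rfl⟩
      exact (gup_le_iff H Hp hs ht hB hy hx).mp h2
    · rintro ⟨y, hy, rfl⟩
      rw [Finset.mem_inter, Finset.mem_Icc] at hy
      refine ⟨⟨y, hy.1, rfl⟩, ?_, (gup_le_iff H Hp hs ht hB hy.1 hx).mpr hy.2.2⟩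
      have := gup_mem_Icc H Hp hs ht hB hy.1 (mt := mt)
      rw [Finset.mem_Icc] at this
      exact this.1
  rw [hset, Finset.card_image_of_injOn]
  intro a ha b hb h
  exact gup_injOn H Hp hs ht hB (Finset.mem_inter.mp ha).1 (Finset.mem_inter.mp hb).1 h

end Gamma

section SplitCons
open Classical

variable {ms mt d p : ℕ} {τ : Finset ℕ → Bool}

lemma card_insert_inter {C' : Finset ℕ} {x c : ℕ} (hx : x ∉ C') (hx1 : 1 ≤ x) :
    (insert x C' ∩ Finset.Icc 1 c).card
      = (C' ∩ Finset.Icc 1 c).card + (if x ≤ c then 1 else 0) := by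
  by_cases hxc : x ≤ c
  · rw [if_pos hxc]
    have hset : insert x C' ∩ Finset.Icc 1 c = insert x (C' ∩ Finset.Icc 1 c) := by
      ext a
      simp only [Finset.mem_inter, Finset.mem_insert, Finset.mem_Icc]
      constructor
      · rintro ⟨rfl | h, h2⟩
        · exact Or.inl rfl
        · exact Or.inr ⟨h, h2⟩
      · rintro (rfl | ⟨h, h2⟩)
        · exact ⟨Or.inl rfl, hx1, hxc⟩
        · exact ⟨Or.inr h, h2⟩
    rw [hset, Finset.card_insert_of_notMem (fun h => hx (Finset.mem_inter.mp h).1)]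
  · rw [if_neg hxc]
    have hset : insert x C' ∩ Finset.Icc 1 c = C' ∩ Finset.Icc 1 c := by
      ext a
      simp only [Finset.mem_inter, Finset.mem_insert, Finset.mem_Icc]
      constructor
      · rintro ⟨rfl | h, h2⟩
        · omega
        · exact ⟨h, h2⟩
      · rintro ⟨h, h2⟩
        exact ⟨Or.inr h, h2⟩
    rw [hset]
    omega

lemma mem_gamma {B : Finset ℕ} {a : ℕ} :
    a ∈ gammaFun ms mt τ B ↔ ∃ x ∈ B, (if Rt ms τ B x then x + mt - ms else x) = a := by
  rw [gammaFun_image, Finset.mem_image]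

lemma card_split_at (H : IsCoSignotope ms d τ) {B : Finset ℕ} {z : ℕ}
    (hB : τ B = true) (hz : z ∈ B) :
    (B ∩ Finset.Icc 1 z).card + (B ∩ Finset.Icc z ms).card = d + 1 := by
  have h1 := Finset.card_union_add_card_inter (B ∩ Finset.Icc 1 z) (B ∩ Finset.Icc z ms)
  have hu : (B ∩ Finset.Icc 1 z) ∪ (B ∩ Finset.Icc z ms) = B := by
    ext a
    simp only [Finset.mem_union, Finset.mem_inter, Finset.mem_Icc]
    constructor
    · rintro (⟨h, _⟩ | ⟨h, _⟩) <;> exact h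
    · intro ha
      have := Finset.mem_Icc.mp (Bsub H hB ha)
      by_cases haz : a ≤ z
      · exact Or.inl ⟨ha, this.1, haz⟩
      · exact Or.inr ⟨ha, by omega, this.2⟩
  have hi : (B ∩ Finset.Icc 1 z) ∩ (B ∩ Finset.Icc z ms) = {z} := by
    ext a
    simp only [Finset.mem_inter, Finset.mem_Icc, Finset.mem_singleton]
    constructor
    · rintro ⟨⟨_, _, h2⟩, ⟨_, h3, _⟩⟩
      omega
    · rintro rfl
      have := Finset.mem_Icc.mp (Bsub H hB hz)
      exact ⟨⟨hz, this.1, le_rfl⟩, ⟨hz, le_rfl, this.2⟩⟩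
  rw [hu, hi] at h1
  rw [Bcard H hB] at h1
  simp at h1
  omega

/-- Split-consistency, asymmetric core: a value cannot be "kept" from one preimage and
"shifted" from another when the images share the complement. -/
lemma SCaux (H : IsCoSignotope ms d τ) (Hp : plusCount τ ≤ p) (hs : p + d ≤ ms)
    (ht : p + d ≤ mt) (hmsmt : ms ≠ mt)
    {Ba Bb C' : Finset ℕ} {xa xb : ℕ}
    (hBa : τ Ba = true) (hBb : τ Bb = true)
    (hAa : gammaFun ms mt τ Ba = insert xa C') (hAb : gammaFun ms mt τ Bb = insert xb C')
    (hxa : xa ∉ C') (hxb : xb ∉ C')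
    {c z : ℕ} (hc : c ∈ C')
    (hcBa : c ∈ Ba) (hzBb : z ∈ Bb)
    (hRa : ¬ Rt ms τ Ba c) (hRb : Rt ms τ Bb z)
    (hgz : z + mt - ms = c) : False := by
  have hgR := gup_R H Hp ht hBb hzBb hRb
  have hczms : c + ms = z + mt := by omega
  obtain ⟨hz1, hzms⟩ := elem_bounds H hBb hzBb
  obtain ⟨hc1, hcms⟩ := elem_bounds H hBa hcBa
  have hxa1 : 1 ≤ xa := by
    have : xa ∈ Finset.Icc 1 mt := by
      apply gamma_subset H Hp hs ht hBa
      rw [hAa]; exact Finset.mem_insert_self _ _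
    exact (Finset.mem_Icc.mp this).1
  have hxb1 : 1 ≤ xb := by
    have : xb ∈ Finset.Icc 1 mt := by
      apply gamma_subset H Hp hs ht hBb
      rw [hAb]; exact Finset.mem_insert_self _ _
    exact (Finset.mem_Icc.mp this).1
  -- positions
  have hjc : (Ba ∩ Finset.Icc 1 c).card
      = (C' ∩ Finset.Icc 1 c).card + (if xa ≤ c then 1 else 0) := by
    have h := gamma_pos H Hp hs ht hBa hcBa
    rw [if_neg hRa, hAa, card_insert_inter hxa hxa1] at h
    omega
  have hlz : (Bb ∩ Finset.Icc 1 z).card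
      = (C' ∩ Finset.Icc 1 c).card + (if xb ≤ c then 1 else 0) := by
    have h := gamma_pos H Hp hs ht hBb hzBb
    rw [if_pos hRb, hgz, hAb, card_insert_inter hxb hxb1] at h
    omega
  have hxac : xa ≠ c := fun h => hxa (h ▸ hc)
  have hxbc : xb ≠ c := fun h => hxb (h ▸ hc)
  -- core equal case
  by_cases hcore : Ba.erase c = Bb.erase z
  · rw [Rt, hcore] at hRa
    exact hRa hRb
  -- families
  have hLsub : famI (Finset.Icc 1 c) (Ba.erase c) ⊆ Pfin ms τ := by
    apply famI_subset_Pfin (erase_subset_Icc H hBa) (Finset.Icc_subset_Icc le_rfl hcms)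
    intro w hw hwC
    rw [Finset.mem_Icc] at hw
    exact notRt_le_true H Hp hs hBa hcBa hRa w
      (mem_line_iff.mpr ⟨hw.1, le_trans hw.2 hcms, hwC⟩) hw.2
  have hRsub : famI (Finset.Icc z ms) (Bb.erase z) ⊆ Pfin ms τ := by
    apply famI_subset_Pfin (erase_subset_Icc H hBb) (Finset.Icc_subset_Icc hz1 le_rfl)
    intro w hw hwC
    rw [Finset.mem_Icc] at hw
    exact Rt_ge_true H hBb hzBb hRb w
      (mem_line_iff.mpr ⟨le_trans hz1 hw.1, hw.2, hwC⟩) hw.1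
  have hbound := fams_card_bound hLsub hRsub
    (le_trans (le_of_eq (plusCount_eq H).symm) Hp)
  have hint : (famI (Finset.Icc 1 c) (Ba.erase c) ∩ famI (Finset.Icc z ms) (Bb.erase z)).card ≤ 1 := by
    apply famI_inter_card_le_one ?_ hcore
    rw [Finset.card_erase_of_mem hcBa, Finset.card_erase_of_mem hzBb, Bcard H hBa, Bcard H hBb]
  have e1 := card_famI (S := Finset.Icc 1 c) (C := Ba.erase c)
  have e2 := card_famI (S := Finset.Icc z ms) (C := Bb.erase z)
  rw [Finset.inter_comm] at e1 e2
  have i1 := inter_insert_card_L hcBa hc1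
  have i2 := inter_insert_card_R hzBb hzms
  have c1 : (Finset.Icc 1 c).card = c := by rw [Nat.card_Icc]; omega
  have c2 : (Finset.Icc z ms).card = ms + 1 - z := by rw [Nat.card_Icc]
  have hsplit := card_split_at H hBb hzBb
  -- if there is no common set we are done by counting
  rcases Finset.eq_empty_or_nonempty
      (famI (Finset.Icc 1 c) (Ba.erase c) ∩ famI (Finset.Icc z ms) (Bb.erase z)) with hemp | ⟨X, hX⟩
  · have hzero : (famI (Finset.Icc 1 c) (Ba.erase c) ∩ famI (Finset.Icc z ms) (Bb.erase z)).card = 0 := by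
      rw [hemp]; rfl
    -- positions give jc ≤ lz + 1; counting contradicts
    split at hjc <;> split at hlz <;> omega
  -- tight case
  have htight : p + d = mt ∧ xa < c ∧ c < xb := by
    have hmem := hX
    rw [Finset.mem_inter] at hmem
    have hone : 1 ≤ (famI (Finset.Icc 1 c) (Ba.erase c) ∩ famI (Finset.Icc z ms) (Bb.erase z)).card :=
      Finset.card_pos.mpr ⟨X, hX⟩
    constructor
    · split at hjc <;> split at hlz <;> omega
    constructor
    · have : xa ≤ c := by
        by_contra hcon
        rw [if_neg hcon] at hjc
        split at hlz <;> omega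
      omega
    · by_contra hcon
      have : xb ≤ c := by omega
      rw [if_pos this] at hlz
      split at hjc <;> omega
  obtain ⟨hpdmt, hxac', hcxb⟩ := htight
  have hmtms : mt < ms := by omega
  -- extract the common set X
  rw [Finset.mem_inter] at hX
  obtain ⟨w, hwS, hwC, hXL⟩ := mem_famI.mp hX.1
  obtain ⟨w', hw'S, hw'C, hXR⟩ := mem_famI.mp hX.2
  rw [Finset.mem_Icc] at hwS hw'S
  have hXtrue : τ X = true := (mem_Pfin.mp (hLsub hX.1)).2
  -- the preimage of xb in Bb
  have hxbmem : xb ∈ gammaFun ms mt τ Bb := by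
    rw [hAb]; exact Finset.mem_insert_self _ _
  obtain ⟨e, heBb, hge⟩ := mem_gamma.mp hxbmem
  have hgele : xb ≤ e := by
    by_cases hRe : Rt ms τ Bb e
    · rw [if_pos hRe] at hge; omega
    · rw [if_neg hRe] at hge; omega
  have hez : e ≠ z := by
    intro h
    rw [h] at hge
    rw [if_pos hRb, hgz] at hge
    exact hxbc hge.symm
  have hew : e ≠ w := by
    intro h
    rw [h] at hgele
    omega
  have heX : e ∈ X := by
    rw [hXR]
    exact Finset.mem_insert_of_mem (Finset.mem_erase.mpr ⟨hez, heBb⟩)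
  have heBa : e ∈ Ba := by
    rw [hXL] at heX
    rcases Finset.mem_insert.mp heX with h | h
    · exact absurd h hew
    · exact Finset.mem_of_mem_erase h
  have hec : e ≠ c := by omega
  -- status transfer Bb → X → Ba
  have step1 : Rt ms τ Bb e ↔ Rt ms τ X e := by
    by_cases hBbX : Bb = X
    · rw [hBbX]
    · have hw'z : w' ≠ z := by
        intro h
        rw [h] at hXR
        rw [Finset.insert_erase hzBb] at hXR
        exact hBbX hXR.symm
      have hw'Bb : w' ∉ Bb := by
        intro h
        exact hw'C (Finset.mem_erase.mpr ⟨hw'z, h⟩)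
      have hcoreX : Bb.erase z = X.erase w' := by
        rw [hXR, Finset.erase_insert hw'C]
      exact F5 H Hp hs hBb hXtrue hzBb (hXR ▸ Finset.mem_insert_self w' _) hcoreX heBb hez
        (fun h => hw'Bb (h ▸ heBb))
  have step2 : Rt ms τ X e ↔ Rt ms τ Ba e := by
    by_cases hXBa : X = Ba
    · rw [hXBa]
    · have hwc : w ≠ c := by
        intro h
        rw [h] at hXL
        rw [Finset.insert_erase hcBa] at hXL
        exact hXBa hXL
      have hcoreX : X.erase w = Ba.erase c := by
        rw [hXL, Finset.erase_insert hwC]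
      refine F5 H Hp hs hXtrue hBa (hXL ▸ Finset.mem_insert_self w _) hcBa hcoreX heX hew hec
  -- images agree, contradiction
  have hgBa : (if Rt ms τ Ba e then e + mt - ms else e) = xb := by
    rw [← hge]
    by_cases hRe : Rt ms τ Bb e
    · rw [if_pos hRe, if_pos ((step2.mp (step1.mp hRe)))]
    · rw [if_neg hRe, if_neg (fun h => hRe (step1.mpr (step2.mpr h)))]
  have hxbBa : xb ∈ gammaFun ms mt τ Ba := mem_gamma.mpr ⟨e, heBa, hgBa⟩
  rw [hAa] at hxbBa
  rcases Finset.mem_insert.mp hxbBa with h | h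
  · omega
  · exact hxb h

end SplitCons

section SCII
open Classical

variable {ms mt d p : ℕ} {τ : Finset ℕ → Bool}

/-- Split-consistency: preimages of a shared image value coincide. -/
lemma SC (H : IsCoSignotope ms d τ) (Hp : plusCount τ ≤ p) (hs : p + d ≤ ms)
    (ht : p + d ≤ mt)
    {B₁ B₃ C' : Finset ℕ} {x₁ x₃ : ℕ}
    (hB₁ : τ B₁ = true) (hB₃ : τ B₃ = true)
    (hA₁ : gammaFun ms mt τ B₁ = insert x₁ C') (hA₃ : gammaFun ms mt τ B₃ = insert x₃ C')
    (hx₁ : x₁ ∉ C') (hx₃ : x₃ ∉ C')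
    {c b₁ b₃ : ℕ} (hc : c ∈ C') (hb₁ : b₁ ∈ B₁) (hb₃ : b₃ ∈ B₃)
    (hg₁ : (if Rt ms τ B₁ b₁ then b₁ + mt - ms else b₁) = c)
    (hg₃ : (if Rt ms τ B₃ b₃ then b₃ + mt - ms else b₃) = c) :
    b₁ = b₃ := by
  by_cases h1 : Rt ms τ B₁ b₁ <;> by_cases h3 : Rt ms τ B₃ b₃
  · rw [if_pos h1] at hg₁
    rw [if_pos h3] at hg₃
    have e1 := gup_R H Hp ht hB₁ hb₁ h1
    have e3 := gup_R H Hp ht hB₃ hb₃ h3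
    omega
  · -- b₁ shifted, b₃ kept
    rw [if_pos h1] at hg₁
    rw [if_neg h3] at hg₃
    by_cases hm : ms = mt
    · have e1 := gup_R H Hp ht hB₁ hb₁ h1
      omega
    · exact absurd (SCaux H Hp hs ht hm hB₃ hB₁ hA₃ hA₁ hx₃ hx₁ hc (hg₃ ▸ hb₃) hb₁
        (hg₃ ▸ h3) h1 hg₁) not_false
  · -- b₁ kept, b₃ shifted
    rw [if_neg h1] at hg₁
    rw [if_pos h3] at hg₃
    by_cases hm : ms = mt
    · have e3 := gup_R H Hp ht hB₃ hb₃ h3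
      omega
    · exact absurd (SCaux H Hp hs ht hm hB₁ hB₃ hA₁ hA₃ hx₁ hx₃ hc (hg₁ ▸ hb₁) hb₃
        (hg₁ ▸ h1) h3 hg₃) not_false
  · rw [if_neg h1] at hg₁
    rw [if_neg h3] at hg₃
    omega

/-- (II-L): extend a kept pivot downwards. -/
lemma IIL (H : IsCoSignotope ms d τ) (Hp : plusCount τ ≤ p) (hs : p + d ≤ ms)
    (ht : p + d ≤ mt) {B : Finset ℕ} {b₀ x' : ℕ}
    (hB : τ B = true) (hb₀ : b₀ ∈ B) (hnR : ¬ Rt ms τ B b₀)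
    (hx'm : x' ∈ Finset.Icc 1 mt) (hx'C : x' ∉ (gammaFun ms mt τ B).erase b₀)
    (hle : x' ≤ b₀) :
    ∃ B₂, τ B₂ = true ∧ gammaFun ms mt τ B₂ = insert x' ((gammaFun ms mt τ B).erase b₀) := by
  have hD := gamma_erase H Hp hs ht hB hb₀
  rw [if_neg hnR] at hD
  rw [Finset.mem_Icc] at hx'm
  obtain ⟨hb01, hb0m⟩ := elem_bounds H hB hb₀
  have hx'D : x' ∉ B.erase b₀ := by
    intro hmem
    by_cases hRx' : Rt ms τ B x'
    · have hlt := F4a H Hp hs hB hb₀ (Finset.mem_of_mem_erase hmem) hnR hRx' (fun h => (Finset.mem_erase.mp hmem).1 h.symm)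
      omega
    · apply hx'C
      rw [hD]
      exact Finset.mem_image.mpr ⟨x', hmem, by rw [if_neg hRx']⟩
  have htrue : τ (insert x' (B.erase b₀)) = true := by
    rcases eq_or_lt_of_le hle with rfl | hlt
    · rw [Finset.insert_erase hb₀]; exact hB
    · exact notRt_le_true H Hp hs hB hb₀ hnR x'
        (mem_line_iff.mpr ⟨hx'm.1, by omega, hx'D⟩) hle
  refine ⟨insert x' (B.erase b₀), htrue, ?_⟩
  have hcore : (insert x' (B.erase b₀)).erase x' = B.erase b₀ := Finset.erase_insert hx'D
  have hx'stat : ¬ Rt ms τ (insert x' (B.erase b₀)) x' := by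
    rw [Rt, hcore]; exact hnR
  rw [gammaFun_image, Finset.image_insert, if_neg hx'stat]
  congr 1
  rw [hD]
  apply Finset.image_congr
  intro y hy
  simp only [Finset.mem_coe] at hy
  have hyb₀ : y ≠ b₀ := (Finset.mem_erase.mp hy).1
  have hyx' : y ≠ x' := fun h => hx'D (h ▸ hy)
  have hiff := F5 H Hp hs htrue hB (Finset.mem_insert_self x' _) hb₀
    (by rw [hcore]) (Finset.mem_insert_of_mem hy) hyx' hyb₀
  simp only []
  rw [if_congr hiff rfl rfl]

/-- (II-R): extend a shifted pivot upwards. -/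
lemma IIR (H : IsCoSignotope ms d τ) (Hp : plusCount τ ≤ p) (hs : p + d ≤ ms)
    (ht : p + d ≤ mt) {B : Finset ℕ} {b₀ x' : ℕ}
    (hB : τ B = true) (hb₀ : b₀ ∈ B) (hR : Rt ms τ B b₀)
    (hx'm : x' ∈ Finset.Icc 1 mt) (hx'C : x' ∉ (gammaFun ms mt τ B).erase (b₀ + mt - ms))
    (hge : b₀ + mt - ms ≤ x') :
    ∃ B₂, τ B₂ = true ∧
      gammaFun ms mt τ B₂ = insert x' ((gammaFun ms mt τ B).erase (b₀ + mt - ms)) := by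
  have hD := gamma_erase H Hp hs ht hB hb₀
  rw [if_pos hR] at hD
  rw [Finset.mem_Icc] at hx'm
  obtain ⟨hb01, hb0m⟩ := elem_bounds H hB hb₀
  have hgb := gup_R H Hp ht hB hb₀ hR
  set u' := x' + ms - mt with hu'
  have hu'eq : u' + mt = x' + ms := by omega
  have hu'ge : b₀ ≤ u' := by omega
  have hu'ms : u' ≤ ms := by omega
  have hu'1 : 1 ≤ u' := by omega
  have hu'D : u' ∉ B.erase b₀ := by
    intro hmem
    by_cases hRu' : Rt ms τ B u'
    · apply hx'C
      rw [hD]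
      refine Finset.mem_image.mpr ⟨u', hmem, ?_⟩
      rw [if_pos hRu']
      have := gup_R H Hp ht hB (Finset.mem_of_mem_erase hmem) hRu'
      omega
    · have hlt := F4a H Hp hs hB (Finset.mem_of_mem_erase hmem) hb₀ hRu' hR
        (Finset.mem_erase.mp hmem).1
      omega
  have htrue : τ (insert u' (B.erase b₀)) = true := by
    rcases eq_or_lt_of_le hu'ge with heq | hlt
    · rw [← heq, Finset.insert_erase hb₀]; exact hB
    · exact Rt_ge_true H hB hb₀ hR u'
        (mem_line_iff.mpr ⟨hu'1, hu'ms, hu'D⟩) hu'ge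
  refine ⟨insert u' (B.erase b₀), htrue, ?_⟩
  have hcore : (insert u' (B.erase b₀)).erase u' = B.erase b₀ := Finset.erase_insert hu'D
  have hu'stat : Rt ms τ (insert u' (B.erase b₀)) u' := by
    rw [Rt, hcore]; exact hR
  rw [gammaFun_image, Finset.image_insert, if_pos hu'stat]
  have hval : u' + mt - ms = x' := by omega
  rw [hval]
  congr 1
  rw [hD]
  apply Finset.image_congr
  intro y hy
  simp only [Finset.mem_coe] at hy
  have hyb₀ : y ≠ b₀ := (Finset.mem_erase.mp hy).1
  have hyu' : y ≠ u' := fun h => hu'D (h ▸ hy)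
  have hiff := F5 H Hp hs htrue hB (Finset.mem_insert_self u' _) hb₀
    (by rw [hcore]) (Finset.mem_insert_of_mem hy) hyu' hyb₀
  simp only []
  rw [if_congr hiff rfl rfl]

end SCII

section Interp
open Classical

variable {ms mt d p : ℕ} {τ : Finset ℕ → Bool}

/-- (I): the image family has no gaps inside a line. -/
lemma Ilem (H : IsCoSignotope ms d τ) (Hp : plusCount τ ≤ p) (hs : p + d ≤ ms)
    (ht : p + d ≤ mt)
    {B₁ B₃ C' : Finset ℕ} {x₁ x₂ x₃ : ℕ}
    (hB₁ : τ B₁ = true) (hB₃ : τ B₃ = true)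
    (hA₁ : gammaFun ms mt τ B₁ = insert x₁ C') (hA₃ : gammaFun ms mt τ B₃ = insert x₃ C')
    (hx₁ : x₁ ∉ C') (hx₃ : x₃ ∉ C')
    (h12 : x₁ < x₂) (h23 : x₂ < x₃) (hx₂C : x₂ ∉ C') :
    ∃ B₂, τ B₂ = true ∧ gammaFun ms mt τ B₂ = insert x₂ C' := by
  have hx₁mem : x₁ ∈ gammaFun ms mt τ B₁ := by rw [hA₁]; exact Finset.mem_insert_self _ _
  obtain ⟨u₁, hu₁B, hgu₁⟩ := mem_gamma.mp hx₁mem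
  have hx₃mem : x₃ ∈ gammaFun ms mt τ B₃ := by rw [hA₃]; exact Finset.mem_insert_self _ _
  obtain ⟨u₃, hu₃B, hgu₃⟩ := mem_gamma.mp hx₃mem
  have hD₁ := gamma_erase H Hp hs ht hB₁ hu₁B
  rw [hgu₁, hA₁, Finset.erase_insert hx₁] at hD₁
  have hD₃ := gamma_erase H Hp hs ht hB₃ hu₃B
  rw [hgu₃, hA₃, Finset.erase_insert hx₃] at hD₃
  have hcard₁ := card_erase' H hB₁ hu₁B
  have hcard₃ := card_erase' H hB₃ hu₃B
  have hDsub : B₁.erase u₁ ⊆ B₃.erase u₃ := by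
    intro y hy
    have hyB₁ : y ∈ B₁ := Finset.mem_of_mem_erase hy
    have hgy : (if Rt ms τ B₁ y then y + mt - ms else y) ∈ C' := by
      rw [hD₁]; exact Finset.mem_image_of_mem _ hy
    have hmem3 : (if Rt ms τ B₁ y then y + mt - ms else y) ∈
        (B₃.erase u₃).image (fun w => if Rt ms τ B₃ w then w + mt - ms else w) := by
      rw [← hD₃]; exact hgy
    obtain ⟨y₃, hy₃, hgy₃⟩ := Finset.mem_image.mp hmem3
    have heq := SC H Hp hs ht hB₁ hB₃ hA₁ hA₃ hx₁ hx₃ hgy hyB₁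
      (Finset.mem_of_mem_erase hy₃) rfl hgy₃
    rw [heq]; exact hy₃
  have hDeq : B₁.erase u₁ = B₃.erase u₃ :=
    Finset.eq_of_subset_of_card_le hDsub (by omega)
  have hpivot : Rt ms τ B₁ u₁ ↔ Rt ms τ B₃ u₃ := by rw [Rt, Rt, hDeq]
  obtain ⟨hu₁1, hu₁m⟩ := elem_bounds H hB₁ hu₁B
  obtain ⟨hu₃1, hu₃m⟩ := elem_bounds H hB₃ hu₃B
  by_cases hcase : Rt ms τ B₁ u₁
  · -- shifted pivots
    have hR₃ : Rt ms τ B₃ u₃ := hpivot.mp hcase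
    rw [if_pos hcase] at hgu₁
    rw [if_pos hR₃] at hgu₃
    have hgR₁ := gup_R H Hp ht hB₁ hu₁B hcase
    have hgR₃ := gup_R H Hp ht hB₃ hu₃B hR₃
    have hu₂eq : (x₂ + ms - mt) + mt = x₂ + ms := by omega
    have hu₂gt : u₁ < x₂ + ms - mt := by omega
    have hu₂lt : x₂ + ms - mt < u₃ := by omega
    have hu₂D : (x₂ + ms - mt) ∉ B₁.erase u₁ := by
      intro hmem
      by_cases hRu₂ : Rt ms τ B₁ (x₂ + ms - mt)
      · apply hx₂C
        rw [hD₁]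
        refine Finset.mem_image.mpr ⟨x₂ + ms - mt, hmem, ?_⟩
        rw [if_pos hRu₂]
        have := gup_R H Hp ht hB₁ (Finset.mem_of_mem_erase hmem) hRu₂
        omega
      · have := F4a H Hp hs hB₁ (Finset.mem_of_mem_erase hmem) hu₁B hRu₂ hcase
          (Finset.mem_erase.mp hmem).1
        omega
    have htrue : τ (insert (x₂ + ms - mt) (B₁.erase u₁)) = true :=
      Rt_ge_true H hB₁ hu₁B hcase _
        (mem_line_iff.mpr ⟨by omega, by omega, hu₂D⟩) (le_of_lt hu₂gt)
    have hcore : (insert (x₂ + ms - mt) (B₁.erase u₁)).erase (x₂ + ms - mt) = B₁.erase u₁ :=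
      Finset.erase_insert hu₂D
    have hstat : Rt ms τ (insert (x₂ + ms - mt) (B₁.erase u₁)) (x₂ + ms - mt) := by
      rw [Rt, hcore]; exact hcase
    refine ⟨insert (x₂ + ms - mt) (B₁.erase u₁), htrue, ?_⟩
    rw [gammaFun_image, Finset.image_insert, if_pos hstat]
    have hval : (x₂ + ms - mt) + mt - ms = x₂ := by omega
    rw [hval]
    congr 1
    rw [hD₁]
    apply Finset.image_congr
    intro y hy
    simp only [Finset.mem_coe] at hy
    have hyu₁ : y ≠ u₁ := (Finset.mem_erase.mp hy).1
    have hyu₂ : y ≠ x₂ + ms - mt := fun h => hu₂D (h ▸ hy)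
    have hiff := F5 H Hp hs hB₁ htrue hu₁B (Finset.mem_insert_self _ _)
      (by rw [hcore]) (Finset.mem_of_mem_erase hy) hyu₁ hyu₂
    simp only []
    rw [if_congr hiff.symm rfl rfl]
  · -- kept pivots
    have hnR₃ : ¬ Rt ms τ B₃ u₃ := fun h => hcase (hpivot.mpr h)
    rw [if_neg hcase] at hgu₁
    rw [if_neg hnR₃] at hgu₃
    have hx₂D : x₂ ∉ B₃.erase u₃ := by
      intro hmem
      by_cases hRx₂ : Rt ms τ B₃ x₂
      · have := F4a H Hp hs hB₃ hu₃B (Finset.mem_of_mem_erase hmem) hnR₃ hRx₂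
          (fun h => (Finset.mem_erase.mp hmem).1 h.symm)
        omega
      · apply hx₂C
        rw [hD₃]
        exact Finset.mem_image.mpr ⟨x₂, hmem, by rw [if_neg hRx₂]⟩
    have htrue : τ (insert x₂ (B₃.erase u₃)) = true :=
      notRt_le_true H Hp hs hB₃ hu₃B hnR₃ x₂
        (mem_line_iff.mpr ⟨by omega, by omega, hx₂D⟩) (by omega)
    have hcore : (insert x₂ (B₃.erase u₃)).erase x₂ = B₃.erase u₃ :=
      Finset.erase_insert hx₂D
    have hstat : ¬ Rt ms τ (insert x₂ (B₃.erase u₃)) x₂ := by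
      rw [Rt, hcore]; exact hnR₃
    refine ⟨insert x₂ (B₃.erase u₃), htrue, ?_⟩
    rw [gammaFun_image, Finset.image_insert, if_neg hstat]
    congr 1
    rw [hD₃]
    apply Finset.image_congr
    intro y hy
    simp only [Finset.mem_coe] at hy
    have hyu₃ : y ≠ u₃ := (Finset.mem_erase.mp hy).1
    have hyx₂ : y ≠ x₂ := fun h => hx₂D (h ▸ hy)
    have hiff := F5 H Hp hs hB₃ htrue hu₃B (Finset.mem_insert_self _ _)
      (by rw [hcore]) (Finset.mem_of_mem_erase hy) hyu₃ hyx₂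
    simp only []
    rw [if_congr hiff.symm rfl rfl]

end Interp
section Phi
open Classical

variable {ms mt d p : ℕ} {τ : Finset ℕ → Bool}

lemma ofPlusSet_true_iff {S : Set (Finset ℕ)} {A : Finset ℕ} :
    ofPlusSet S A = true ↔ A ∈ S := by
  unfold ofPlusSet
  split
  · simp_all
  · simp_all

lemma phi_true_iff {A : Finset ℕ} :
    phiFun ms mt τ A = true ↔ ∃ B, τ B = true ∧ A = gammaFun ms mt τ B := by
  unfold phiFun
  rw [ofPlusSet_true_iff]
  exact Iff.rfl

lemma phi_part1 (H : IsCoSignotope ms d τ) (Hp : plusCount τ ≤ p) (hs : p + d ≤ ms)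
    (ht : p + d ≤ mt) :
    ∀ A, phiFun ms mt τ A = true → A ⊆ Finset.Icc 1 mt ∧ A.card = d := by
  intro A hA
  obtain ⟨B, hB, rfl⟩ := phi_true_iff.mp hA
  exact ⟨gamma_subset H Hp hs ht hB, gamma_card H Hp hs ht hB⟩

lemma phi_Pfin_subset (H : IsCoSignotope ms d τ) (Hp : plusCount τ ≤ p) (hs : p + d ≤ ms)
    (ht : p + d ≤ mt) :
    Pfin mt (phiFun ms mt τ) ⊆ (Pfin ms τ).image (gammaFun ms mt τ) := by
  intro A hA
  obtain ⟨hsub, htrue⟩ := mem_Pfin.mp hA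
  obtain ⟨B, hB, rfl⟩ := phi_true_iff.mp htrue
  exact Finset.mem_image.mpr ⟨B, mem_Pfin.mpr ⟨Bsub H hB, hB⟩, rfl⟩

lemma phi_count_le (H : IsCoSignotope ms d τ) (Hp : plusCount τ ≤ p) (hs : p + d ≤ ms)
    (ht : p + d ≤ mt) : (Pfin mt (phiFun ms mt τ)).card ≤ p :=
  le_trans (Finset.card_le_card (phi_Pfin_subset H Hp hs ht))
    (le_trans Finset.card_image_le (le_trans (le_of_eq (plusCount_eq H).symm) Hp))

lemma phi_cosig (H : IsCoSignotope ms d τ) (Hp : plusCount τ ≤ p) (hs : p + d ≤ ms)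
    (ht : p + d ≤ mt) : IsCoSignotope mt d (phiFun ms mt τ) := by
  refine ⟨phi_part1 H Hp hs ht, ?_⟩
  intro B' hB'sub hB'card b' hb'
  rcases Finset.eq_empty_or_nonempty
      ((line mt (B'.erase b')).filter
        (fun x => phiFun ms mt τ (insert x (B'.erase b')) = true)) with hTe | ⟨x₀, hx₀⟩
  · have hall : ∀ b ∈ series mt (phiFun ms mt τ) (B'.erase b'), b = false := by
      intro b hb
      rw [series_eq] at hb
      obtain ⟨x, hx, rfl⟩ := List.mem_map.mp hb
      rw [Finset.mem_sort] at hx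
      cases hc : phiFun ms mt τ (insert x (B'.erase b'))
      · rfl
      · exfalso
        have hmem : x ∈ (line mt (B'.erase b')).filter
            (fun x => phiFun ms mt τ (insert x (B'.erase b')) = true) :=
          Finset.mem_filter.mpr ⟨hx, hc⟩
        rw [hTe] at hmem
        exact absurd hmem (Finset.notMem_empty x)
    rw [sc_const hall]
    omega
  · rw [Finset.mem_filter] at hx₀
    obtain ⟨hx₀line, hx₀true⟩ := hx₀
    obtain ⟨B, hB, hAB⟩ := phi_true_iff.mp hx₀true
    have hx₀mem : x₀ ∈ gammaFun ms mt τ B := by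
      rw [← hAB]; exact Finset.mem_insert_self _ _
    obtain ⟨u₀, hu₀B, hgu₀⟩ := mem_gamma.mp hx₀mem
    have hx₀C' : x₀ ∉ B'.erase b' := (mem_line_iff.mp hx₀line).2.2
    have hγC' : (gammaFun ms mt τ B).erase x₀ = B'.erase b' := by
      rw [← hAB, Finset.erase_insert hx₀C']
    have hne_line : (line mt (B'.erase b')).Nonempty := ⟨x₀, hx₀line⟩
    by_cases hR : Rt ms τ B u₀
    · -- suffix case
      have hval : u₀ + mt - ms = x₀ := by rw [if_pos hR] at hgu₀; exact hgu₀
      have hup : ∀ x ∈ line mt (B'.erase b'), x₀ ≤ x →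
          phiFun ms mt τ (insert x (B'.erase b')) = true := by
        intro x hx hxge
        obtain ⟨h1x, hxmt, hxC⟩ := mem_line_iff.mp hx
        obtain ⟨B₂, hB₂, hA₂⟩ := IIR H Hp hs ht hB hu₀B hR
          (Finset.mem_Icc.mpr ⟨h1x, hxmt⟩)
          (by rw [hval, hγC']; exact hxC) (by omega)
        rw [hval, hγC'] at hA₂
        exact phi_true_iff.mpr ⟨B₂, hB₂, hA₂.symm⟩
      have hTne : ((line mt (B'.erase b')).filter
          (fun x => phiFun ms mt τ (insert x (B'.erase b')) = true)).Nonempty :=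
        ⟨x₀, Finset.mem_filter.mpr ⟨hx₀line, hx₀true⟩⟩
      have hiff : ∀ x ∈ line mt (B'.erase b'),
          (phiFun ms mt τ (insert x (B'.erase b')) = true ↔
            ((line mt (B'.erase b')).filter
              (fun x => phiFun ms mt τ (insert x (B'.erase b')) = true)).min' hTne ≤ x) := by
        intro x hx
        constructor
        · intro hxt
          exact Finset.min'_le _ x (Finset.mem_filter.mpr ⟨hx, hxt⟩)
        · intro hge
          have hm₀mem := Finset.min'_mem _ hTne
          rw [Finset.mem_filter] at hm₀mem
          rcases eq_or_lt_of_le hge with heq | hlt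
          · rw [← heq]; exact hm₀mem.2
          · by_cases hx₀le : x₀ ≤ x
            · exact hup x hx hx₀le
            · -- m₀ < x < x₀ ≤ max'
              have hmax := Finset.max'_mem _ hne_line
              have hxmax : x < (line mt (B'.erase b')).max' hne_line := by
                have h1 := Finset.le_max' _ x₀ hx₀line
                omega
              have hmaxtrue := hup _ hmax (Finset.le_max' _ x₀ hx₀line)
              obtain ⟨B₁, hB₁, hA₁⟩ := phi_true_iff.mp hm₀mem.2
              obtain ⟨B₃, hB₃, hA₃⟩ := phi_true_iff.mp hmaxtrue
              obtain ⟨B₂, hB₂, hA₂⟩ := Ilem H Hp hs ht hB₁ hB₃ hA₁.symm hA₃.symm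
                (mem_line_iff.mp hm₀mem.1).2.2
                (mem_line_iff.mp hmax).2.2 hlt hxmax
                (mem_line_iff.mp hx).2.2
              exact phi_true_iff.mpr ⟨B₂, hB₂, hA₂.symm⟩
      rw [series_eq]
      exact sc_map_suffix _ (Finset.pairwise_sort _ _)
        (fun x hx => hiff x ((Finset.mem_sort _).mp hx))
    · -- prefix case
      have hval : u₀ = x₀ := by rw [if_neg hR] at hgu₀; exact hgu₀
      subst hval
      have hdown : ∀ x ∈ line mt (B'.erase b'), x ≤ u₀ →
          phiFun ms mt τ (insert x (B'.erase b')) = true := by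
        intro x hx hxle
        obtain ⟨h1x, hxmt, hxC⟩ := mem_line_iff.mp hx
        obtain ⟨B₂, hB₂, hA₂⟩ := IIL H Hp hs ht hB hu₀B hR
          (Finset.mem_Icc.mpr ⟨h1x, hxmt⟩)
          (by rw [hγC']; exact hxC) hxle
        rw [hγC'] at hA₂
        exact phi_true_iff.mpr ⟨B₂, hB₂, hA₂.symm⟩
      have hTne : ((line mt (B'.erase b')).filter
          (fun x => phiFun ms mt τ (insert x (B'.erase b')) = true)).Nonempty :=
        ⟨u₀, Finset.mem_filter.mpr ⟨hx₀line, hx₀true⟩⟩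
      have hiff : ∀ x ∈ line mt (B'.erase b'),
          (phiFun ms mt τ (insert x (B'.erase b')) = true ↔
            x ≤ ((line mt (B'.erase b')).filter
              (fun x => phiFun ms mt τ (insert x (B'.erase b')) = true)).max' hTne) := by
        intro x hx
        constructor
        · intro hxt
          exact Finset.le_max' _ x (Finset.mem_filter.mpr ⟨hx, hxt⟩)
        · intro hle
          have hM₀mem := Finset.max'_mem _ hTne
          rw [Finset.mem_filter] at hM₀mem
          rcases eq_or_lt_of_le hle with heq | hlt
          · rw [heq]; exact hM₀mem.2
          · by_cases hx₀ge : x ≤ u₀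
            · exact hdown x hx hx₀ge
            · -- min' ≤ x₀ < x < M₀
              have hmin := Finset.min'_mem _ hne_line
              have hxmin : (line mt (B'.erase b')).min' hne_line < x := by
                have h1 := Finset.min'_le _ u₀ hx₀line
                omega
              have hmintrue := hdown _ hmin (Finset.min'_le _ u₀ hx₀line)
              obtain ⟨B₁, hB₁, hA₁⟩ := phi_true_iff.mp hmintrue
              obtain ⟨B₃, hB₃, hA₃⟩ := phi_true_iff.mp hM₀mem.2
              obtain ⟨B₂, hB₂, hA₂⟩ := Ilem H Hp hs ht hB₁ hB₃ hA₁.symm hA₃.symm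
                (mem_line_iff.mp hmin).2.2
                (mem_line_iff.mp hM₀mem.1).2.2 hxmin hlt
                (mem_line_iff.mp hx).2.2
              exact phi_true_iff.mpr ⟨B₂, hB₂, hA₂.symm⟩
      rw [series_eq]
      exact sc_map_prefix _ (Finset.pairwise_sort _ _)
        (fun x hx => hiff x ((Finset.mem_sort _).mp hx))

end Phi
section Inv
open Classical

variable {ms mt d p : ℕ} {τ σ : Finset ℕ → Bool}

lemma M3 (H : IsCoSignotope ms d τ) (Hp : plusCount τ ≤ p) (hs : p + d ≤ ms)
    (ht : p + d ≤ mt) {B : Finset ℕ} {b : ℕ} (hB : τ B = true) (hb : b ∈ B) :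
    Rt mt (phiFun ms mt τ) (gammaFun ms mt τ B) (if Rt ms τ B b then b + mt - ms else b)
      ↔ Rt ms τ B b := by
  have hφ := phi_cosig H Hp hs ht
  have hφp : plusCount (phiFun ms mt τ) ≤ p := by
    rw [plusCount_eq hφ]; exact phi_count_le H Hp hs ht
  have hγtrue : phiFun ms mt τ (gammaFun ms mt τ B) = true := phi_true_iff.mpr ⟨B, hB, rfl⟩
  set gb := (if Rt ms τ B b then b + mt - ms else b) with hgbdef
  have hgbmem : gb ∈ gammaFun ms mt τ B := mem_gamma.mpr ⟨b, hb, rfl⟩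
  have hgbIcc := gup_mem_Icc H Hp hs ht hB hb (mt := mt)
  rw [← hgbdef, Finset.mem_Icc] at hgbIcc
  have hgbC' : gb ∉ (gammaFun ms mt τ B).erase gb := Finset.notMem_erase _ _
  have hne : (line mt ((gammaFun ms mt τ B).erase gb)).Nonempty :=
    ⟨gb, mem_line_iff.mpr ⟨hgbIcc.1, hgbIcc.2, hgbC'⟩⟩
  have hgbline : gb ∈ line mt ((gammaFun ms mt τ B).erase gb) :=
    mem_line_iff.mpr ⟨hgbIcc.1, hgbIcc.2, hgbC'⟩
  obtain ⟨w, hwline, hwfalse⟩ := exists_false_in_line hφ hφp ht hγtrue hgbmem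
  have dir1 : Rt ms τ B b → Rt mt (phiFun ms mt τ) (gammaFun ms mt τ B) gb := by
    intro hRb
    rw [Rt]
    rw [rightAligned_iff hne]
    have hval : gb = b + mt - ms := hgbdef.trans (if_pos hRb)
    have htop : ∀ x ∈ line mt ((gammaFun ms mt τ B).erase gb), gb ≤ x →
        phiFun ms mt τ (insert x ((gammaFun ms mt τ B).erase gb)) = true := by
      intro x hx hgex
      obtain ⟨h1x, hxmt, hxC⟩ := mem_line_iff.mp hx
      obtain ⟨B₂, hB₂, hA₂⟩ := IIR H Hp hs ht hB hb hRb (Finset.mem_Icc.mpr ⟨h1x, hxmt⟩)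
        (by rw [← hval]; exact hxC) (by omega)
      rw [← hval] at hA₂
      exact phi_true_iff.mpr ⟨B₂, hB₂, hA₂.symm⟩
    have hhi := htop _ (Finset.max'_mem _ hne) (Finset.le_max' _ _ hgbline)
    refine ⟨?_, hhi⟩
    cases hlo : phiFun ms mt τ (insert ((line mt ((gammaFun ms mt τ B).erase gb)).min' hne)
        ((gammaFun ms mt τ B).erase gb))
    · rfl
    · exfalso
      have hwtrue : phiFun ms mt τ (insert w ((gammaFun ms mt τ B).erase gb)) = true := by
        rcases eq_or_lt_of_le (Finset.min'_le _ w hwline) with heq | hlt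
        · rw [← heq]; exact hlo
        · rcases eq_or_lt_of_le (Finset.le_max' _ w hwline) with heq | hlt2
          · rw [heq]; exact hhi
          · obtain ⟨B₁, hB₁, hA₁⟩ := phi_true_iff.mp hlo
            obtain ⟨B₃, hB₃, hA₃⟩ := phi_true_iff.mp hhi
            obtain ⟨B₂, hB₂, hA₂⟩ := Ilem H Hp hs ht hB₁ hB₃ hA₁.symm hA₃.symm
              (mem_line_iff.mp (Finset.min'_mem _ hne)).2.2
              (mem_line_iff.mp (Finset.max'_mem _ hne)).2.2 hlt hlt2
              (mem_line_iff.mp hwline).2.2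
            exact phi_true_iff.mpr ⟨B₂, hB₂, hA₂.symm⟩
      rw [hwtrue] at hwfalse
      exact Bool.noConfusion hwfalse
  have dir2 : ¬ Rt ms τ B b → ¬ Rt mt (phiFun ms mt τ) (gammaFun ms mt τ B) gb := by
    intro hnR hR'
    rw [Rt, rightAligned_iff hne] at hR'
    have hval : gb = b := hgbdef.trans (if_neg hnR)
    have hlotrue : phiFun ms mt τ (insert ((line mt ((gammaFun ms mt τ B).erase gb)).min' hne)
        ((gammaFun ms mt τ B).erase gb)) = true := by
      have hmin := Finset.min'_mem _ hne
      obtain ⟨h1x, hxmt, hxC⟩ := mem_line_iff.mp hmin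
      obtain ⟨B₂, hB₂, hA₂⟩ := IIL H Hp hs ht hB hb hnR (Finset.mem_Icc.mpr ⟨h1x, hxmt⟩)
        (by rw [← hval]; exact hxC)
        (by have := Finset.min'_le _ _ hgbline; omega)
      rw [← hval] at hA₂
      exact phi_true_iff.mpr ⟨B₂, hB₂, hA₂.symm⟩
    rw [hlotrue] at hR'
    exact Bool.noConfusion hR'.1
  constructor
  · intro h'
    by_contra hn
    exact dir2 hn h'
  · exact dir1

lemma gamma_inv (H : IsCoSignotope ms d τ) (Hp : plusCount τ ≤ p) (hs : p + d ≤ ms)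
    (ht : p + d ≤ mt) {B : Finset ℕ} (hB : τ B = true) :
    gammaFun mt ms (phiFun ms mt τ) (gammaFun ms mt τ B) = B := by
  have hkey : ∀ b ∈ B,
      (if Rt mt (phiFun ms mt τ) (gammaFun ms mt τ B) (if Rt ms τ B b then b + mt - ms else b)
        then (if Rt ms τ B b then b + mt - ms else b) + ms - mt
        else (if Rt ms τ B b then b + mt - ms else b)) = b := by
    intro b hb
    have hm3 := M3 H Hp hs ht hB hb
    by_cases hRb : Rt ms τ B b
    · rw [if_pos (hm3.mpr hRb), if_pos hRb]
      have := gup_R H Hp ht hB hb hRb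
      omega
    · rw [if_neg (fun h => hRb (hm3.mp h)), if_neg hRb]
  ext a
  rw [mem_gamma]
  constructor
  · rintro ⟨y, hy, rfl⟩
    obtain ⟨b, hb, rfl⟩ := mem_gamma.mp hy
    rw [hkey b hb]
    exact hb
  · intro ha
    exact ⟨(if Rt ms τ B a then a + mt - ms else a), mem_gamma.mpr ⟨a, ha, rfl⟩, hkey a ha⟩

lemma phi_Pfin_eq (H : IsCoSignotope ms d τ) (Hp : plusCount τ ≤ p) (hs : p + d ≤ ms)
    (ht : p + d ≤ mt) :
    Pfin mt (phiFun ms mt τ) = (Pfin ms τ).image (gammaFun ms mt τ) := by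
  apply Finset.Subset.antisymm (phi_Pfin_subset H Hp hs ht)
  intro A hA
  obtain ⟨B, hB, rfl⟩ := Finset.mem_image.mp hA
  have hBt := (mem_Pfin.mp hB).2
  exact mem_Pfin.mpr ⟨gamma_subset H Hp hs ht hBt, phi_true_iff.mpr ⟨B, hBt, rfl⟩⟩

lemma phi_plusCount (H : IsCoSignotope ms d τ) (Hp : plusCount τ ≤ p) (hs : p + d ≤ ms)
    (ht : p + d ≤ mt) : plusCount (phiFun ms mt τ) = plusCount τ := by
  rw [plusCount_eq (phi_cosig H Hp hs ht), phi_Pfin_eq H Hp hs ht,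
    Finset.card_image_of_injOn, ← plusCount_eq H]
  intro B hBp B' hB'p heq
  simp only [Finset.mem_coe] at hBp hB'p
  have h1 := gamma_inv H Hp hs ht (mem_Pfin.mp hBp).2
  have h2 := gamma_inv H Hp hs ht (mem_Pfin.mp hB'p).2
  rw [← h1, ← h2, heq]

lemma phi_phi (H : IsCoSignotope ms d τ) (Hp : plusCount τ ≤ p) (hs : p + d ≤ ms)
    (ht : p + d ≤ mt) : phiFun mt ms (phiFun ms mt τ) = τ := by
  funext A
  have hiff : phiFun mt ms (phiFun ms mt τ) A = true ↔ τ A = true := by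
    constructor
    · intro h
      obtain ⟨A', hA', rfl⟩ := phi_true_iff.mp h
      obtain ⟨B, hB, rfl⟩ := phi_true_iff.mp hA'
      rw [gamma_inv H Hp hs ht hB]
      exact hB
    · intro h
      exact phi_true_iff.mpr ⟨gammaFun ms mt τ A, phi_true_iff.mpr ⟨A, h, rfl⟩,
        (gamma_inv H Hp hs ht h).symm⟩
  cases h : τ A
  · have h2 : ¬ phiFun mt ms (phiFun ms mt τ) A = true := fun hc => by
      have := hiff.mp hc
      rw [this] at h
      exact Bool.noConfusion h
    rw [Bool.not_eq_true] at h2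
    exact h2
  · exact hiff.mpr h

lemma TS (H : IsCoSignotope ms d τ) (Hp : plusCount τ ≤ p)
    (Hσ : IsCoSignotope ms d σ) (Hpσ : plusCount σ ≤ p) (hs : p + d ≤ ms)
    (hmono : ∀ A, τ A = true → σ A = true)
    {B : Finset ℕ} {b : ℕ} (hB : τ B = true) (hb : b ∈ B) :
    Rt ms τ B b ↔ Rt ms σ B b := by
  have hBσ := hmono B hB
  have hne : (line ms (B.erase b)).Nonempty := ⟨b, self_mem_line H hB hb⟩
  constructor
  · intro hR
    by_contra hnR
    obtain ⟨_, hhi'⟩ := notRt_heads Hσ Hpσ hs hBσ hb hnR hne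
    obtain ⟨_, hhi⟩ := (rightAligned_iff hne).mp hR
    have h2 := hmono _ hhi
    rw [h2] at hhi'
    exact Bool.noConfusion hhi'
  · intro hR
    by_contra hnR
    obtain ⟨hlo, _⟩ := notRt_heads H Hp hs hB hb hnR hne
    obtain ⟨hlo', _⟩ := (rightAligned_iff hne).mp hR
    have h2 := hmono _ hlo
    rw [h2] at hlo'
    exact Bool.noConfusion hlo'

lemma phi_mono (H : IsCoSignotope ms d τ) (Hσ : IsCoSignotope ms d σ)
    (Hp : plusCount τ ≤ p) (Hpσ : plusCount σ ≤ p) (hs : p + d ≤ ms) (ht : p + d ≤ mt)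
    (hstep : SingleStep τ σ) : SingleStep (phiFun ms mt τ) (phiFun ms mt σ) := by
  obtain ⟨hss, hcount⟩ := hstep
  have hmono : ∀ A, τ A = true → σ A = true := fun A hA => hss.subset hA
  have hgag : ∀ B, τ B = true → gammaFun ms mt σ B = gammaFun ms mt τ B := by
    intro B hB
    rw [gammaFun_image, gammaFun_image]
    apply Finset.image_congr
    intro y hy
    simp only [Finset.mem_coe] at hy
    have hiff := TS H Hp Hσ Hpσ hs hmono hB hy
    simp only []
    rw [if_congr hiff.symm rfl rfl]
  have hsub : {A | phiFun ms mt τ A = true} ⊆ {A | phiFun ms mt σ A = true} := by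
    intro A hA
    simp only [Set.mem_setOf_eq] at hA ⊢
    obtain ⟨B, hB, rfl⟩ := phi_true_iff.mp hA
    exact phi_true_iff.mpr ⟨B, hmono B hB, (hgag B hB).symm⟩
  have hc1 : plusCount (phiFun ms mt τ) = plusCount τ := phi_plusCount H Hp hs ht
  have hc2 : plusCount (phiFun ms mt σ) = plusCount σ := phi_plusCount Hσ Hpσ hs ht
  refine ⟨⟨hsub, ?_⟩, by omega⟩
  intro hsup
  have hEq : {A | phiFun ms mt τ A = true} = {A | phiFun ms mt σ A = true} :=
    Set.Subset.antisymm hsub hsup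
  have hceq : plusCount (phiFun ms mt τ) = plusCount (phiFun ms mt σ) := by
    rw [plusCount, plusCount, hEq]
  omega

lemma coBruhat_map {σ σ' : Finset ℕ → Bool} (hns : p + d ≤ ms) (ht : p + d ≤ mt)
    (h : CoBruhatLe ms d σ σ') :
    plusCount σ' ≤ p → CoBruhatLe mt d (phiFun ms mt σ) (phiFun ms mt σ') := by
  have h' : Relation.ReflTransGen
      (fun a b => IsCoSignotope ms d a ∧ IsCoSignotope ms d b ∧ SingleStep a b) σ σ' := h
  clear h
  induction h' with
  | refl => intro _; exact Relation.ReflTransGen.refl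
  | @tail b c hab hbc ih =>
    intro hc
    obtain ⟨Hb, Hc, hstep⟩ := hbc
    have hb : plusCount b ≤ p := by
      have := hstep.2
      omega
    exact Relation.ReflTransGen.tail (ih hb)
      ⟨phi_cosig Hb hb hns ht, phi_cosig Hc hc hns ht, phi_mono Hb Hc hb hc hns ht hstep⟩

end Inv
end CoSigProof

/-- **Theorem (main bijection, co-signotope form).** For `0 ≤ d < min {n, ñ}` and
`0 ≤ p ≤ min {n, ñ} - d`, there is a bijection between `𝒮̄_{≤p}(n,d)` and
`𝒮̄_{≤p}(ñ,d)` preserving the complementary higher Bruhat order. -/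
theorem statement1 (n tn d p : ℕ) (hdn : d < n) (hdtn : d < tn)
    (hpn : p + d ≤ n) (hptn : p + d ≤ tn) :
    ∃ Φ : ↥(coSigSetLe n d p) ≃ ↥(coSigSetLe tn d p),
      ∀ σ σ' : ↥(coSigSetLe n d p),
        CoBruhatLe n d σ.1 σ'.1 ↔ CoBruhatLe tn d (Φ σ).1 (Φ σ').1 := by
  classical
  have hmem : ∀ (ms mt : ℕ), p + d ≤ ms → p + d ≤ mt → ∀ τ : Finset ℕ → Bool,
      τ ∈ coSigSetLe ms d p → phiFun ms mt τ ∈ coSigSetLe mt d p := by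
    rintro ms mt hs ht τ ⟨H, Hp⟩
    exact ⟨CoSigProof.phi_cosig H Hp hs ht,
      by rw [CoSigProof.phi_plusCount H Hp hs ht]; exact Hp⟩
  refine ⟨⟨fun σ => ⟨phiFun n tn σ.1, hmem n tn hpn hptn σ.1 σ.2⟩,
          fun σ => ⟨phiFun tn n σ.1, hmem tn n hptn hpn σ.1 σ.2⟩, ?_, ?_⟩, ?_⟩
  · intro σ
    exact Subtype.ext (CoSigProof.phi_phi σ.2.1 σ.2.2 hpn hptn)
  · intro σ
    exact Subtype.ext (CoSigProof.phi_phi σ.2.1 σ.2.2 hptn hpn)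
  · intro σ σ'
    constructor
    · intro h
      exact CoSigProof.coBruhat_map hpn hptn h σ'.2.2
    · intro h
      have h2 := CoSigProof.coBruhat_map hptn hpn h
        (hmem n tn hpn hptn σ'.1 σ'.2).2
      have h2' : CoBruhatLe n d (phiFun tn n (phiFun n tn σ.1))
          (phiFun tn n (phiFun n tn σ'.1)) := h2
      rw [CoSigProof.phi_phi σ.2.1 σ.2.2 hpn hptn,
        CoSigProof.phi_phi σ'.2.1 σ'.2.2 hpn hptn] at h2'
      exact h2'
end

section
/- Let $n, d, p$ be non-negative integers with $0 \le d < n$ and $p \le n - d$. Then for every co-signotope $\tau \in \bar{\mathcal{S}}_p(n,d)$, each $+$-component of $\tau$ contains exactly one source subset $S_{n,d,i}$ (for exactly one index $i \in \{0,1,\dots,d\}$). -/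
section AuxSign

lemma aux_sc_cons (a b : Bool) (l : List Bool) :
    signChanges (a :: b :: l) = (if a = b then 0 else 1) + signChanges (b :: l) := by
  simp only [signChanges, List.zip, List.tail]
  split <;> simp_all [List.filter] <;> omega

lemma aux_sc_le_cons (a : Bool) (l : List Bool) : signChanges l ≤ signChanges (a :: l) := by
  cases l with
  | nil => simp [signChanges]
  | cons b t => rw [aux_sc_cons]; omega

lemma aux_sc_zero (l : List Bool) (h : signChanges l = 0) :
    ∀ (i : ℕ) (v : Bool), l[i]? = some v → l[0]? = some v := by
  induction l with
  | nil => intro i v hv; simp at hv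
  | cons a t ih =>
    intro i v hv
    match i with
    | 0 => exact hv
    | (i+1) =>
      simp only [List.getElem?_cons_succ] at hv
      cases t with
      | nil => simp at hv
      | cons b t' =>
        rw [aux_sc_cons] at h
        have h1 : a = b := by by_contra hc; simp [hc] at h
        have h2 : signChanges (b :: t') = 0 := by omega
        have := ih h2 i v hv
        simp only [List.getElem?_cons_zero] at this ⊢
        rw [h1]; exact this

lemma aux_sc_between (l : List Bool) (h : signChanges l ≤ 1) :
    ∀ (b : Bool) (i j k : ℕ), i ≤ j → j ≤ k → l[i]? = some b → l[k]? = some b →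
      l[j]? = some b := by
  induction l with
  | nil => intro b i j k _ _ hi; simp at hi
  | cons a t ih =>
    intro b i j k hij hjk hi hk
    match j with
    | 0 =>
      match i with
      | 0 => exact hi
      | (i+1) => omega
    | (j+1) =>
      match k with
      | 0 => omega
      | (k+1) =>
        simp only [List.getElem?_cons_succ] at hk ⊢
        match i with
        | (i+1) =>
          simp only [List.getElem?_cons_succ] at hi
          exact ih (le_trans (aux_sc_le_cons a t) h) b i j k (by omega) (by omega) hi hk
        | 0 =>
          simp only [List.getElem?_cons_zero] at hi
          have ha : a = b := by injection hi
          cases t with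
          | nil => simp at hk
          | cons c t' =>
            by_cases hc : c = b
            · exact ih (le_trans (aux_sc_le_cons a (c :: t')) h) b 0 j k
                (by omega) (by omega) (by simp [hc]) hk
            · rw [aux_sc_cons] at h
              have hac : ¬ a = c := by rw [ha]; exact fun hh => hc hh.symm
              rw [if_neg hac] at h
              have h0 : signChanges (c :: t') = 0 := by omega
              have := aux_sc_zero _ h0 k b hk
              simp only [List.getElem?_cons_zero] at this
              exact absurd (by injection this) hc

lemma aux_series_between {n : ℕ} {τ : Finset ℕ → Bool} {C : Finset ℕ}
    (hsc : signChanges (series n τ C) ≤ 1) (b : Bool) {z1 z2 z3 : ℕ}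
    (h1 : z1 ∈ Finset.Icc 1 n \ C) (h2 : z2 ∈ Finset.Icc 1 n \ C)
    (h3 : z3 ∈ Finset.Icc 1 n \ C) (h12 : z1 ≤ z2) (h23 : z2 ≤ z3)
    (e1 : τ (insert z1 C) = b) (e3 : τ (insert z3 C) = b) :
    τ (insert z2 C) = b := by
  set l := (Finset.Icc 1 n \ C).sort (· ≤ ·) with hl
  have hser : series n τ C = l.map (fun x => τ (insert x C)) := rfl
  have hmem : ∀ z, z ∈ Finset.Icc 1 n \ C → z ∈ l := fun z hz => (Finset.mem_sort _).mpr hz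
  obtain ⟨i1, hi1⟩ := List.mem_iff_get.mp (hmem z1 h1)
  obtain ⟨i2, hi2⟩ := List.mem_iff_get.mp (hmem z2 h2)
  obtain ⟨i3, hi3⟩ := List.mem_iff_get.mp (hmem z3 h3)
  have hsm : StrictMono l.get := (Finset.sortedLT_sort _).strictMono_get
  have hE : ∀ (i : Fin l.length) (z : ℕ), l.get i = z →
      (series n τ C)[(i : ℕ)]? = some (τ (insert z C)) := by
    intro i z hz
    rw [hser]
    simp [List.getElem?_map, List.getElem?_eq_getElem i.isLt, ← List.get_eq_getElem, hz]
  have hle12 : (i1 : ℕ) ≤ (i2 : ℕ) := by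
    by_contra hcon
    push_neg at hcon
    have := hsm (show i2 < i1 from hcon)
    rw [hi1, hi2] at this; omega
  have hle23 : (i2 : ℕ) ≤ (i3 : ℕ) := by
    by_contra hcon
    push_neg at hcon
    have := hsm (show i3 < i2 from hcon)
    rw [hi2, hi3] at this; omega
  have key := aux_sc_between (series n τ C) hsc b i1 i2 i3 hle12 hle23
    (by rw [hE i1 z1 hi1, e1]) (by rw [hE i3 z3 hi3, e3])
  rw [hE i2 z2 hi2] at key
  injection key

lemma aux_sc_of_co {n d : ℕ} {τ : Finset ℕ → Bool} (hco : IsCoSignotope n d τ) (hdn : d < n)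
    {C : Finset ℕ} (hCU : C ⊆ Finset.Icc 1 n) (hCc : C.card + 1 = d) :
    signChanges (series n τ C) ≤ 1 := by
  have hne : (Finset.Icc 1 n \ C).Nonempty := by
    rw [← Finset.card_pos, Finset.card_sdiff_of_subset hCU, Nat.card_Icc]; omega
  obtain ⟨t, ht⟩ := hne
  rw [Finset.mem_sdiff] at ht
  have hsub : insert t C ⊆ Finset.Icc 1 n := Finset.insert_subset ht.1 hCU
  have hcard : (insert t C).card = d := by rw [Finset.card_insert_of_notMem ht.2]; omega
  have := hco.2 (insert t C) hsub hcard t (Finset.mem_insert_self t C)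
  rwa [Finset.erase_insert ht.2] at this

lemma aux_between {n d : ℕ} {τ : Finset ℕ → Bool} (hco : IsCoSignotope n d τ) (hdn : d < n)
    {B : Finset ℕ} (hB : τ B = true) {c : ℕ} (hc : c ∈ B) (b : Bool) {z1 z2 z3 : ℕ}
    (h1 : z1 ∈ Finset.Icc 1 n \ B.erase c) (h2 : z2 ∈ Finset.Icc 1 n \ B.erase c)
    (h3 : z3 ∈ Finset.Icc 1 n \ B.erase c) (h12 : z1 ≤ z2) (h23 : z2 ≤ z3)
    (e1 : τ (insert z1 (B.erase c)) = b) (e3 : τ (insert z3 (B.erase c)) = b) :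
    τ (insert z2 (B.erase c)) = b := by
  obtain ⟨hBU, hBd⟩ := hco.1 B hB
  have hd1 : 1 ≤ d := by
    have := Finset.card_pos.mpr ⟨c, hc⟩; omega
  have hCc : (B.erase c).card + 1 = d := by
    rw [Finset.card_erase_of_mem hc, hBd]; omega
  exact aux_series_between
    (aux_sc_of_co hco hdn ((Finset.erase_subset c B).trans hBU) hCc) b h1 h2 h3 h12 h23 e1 e3

end AuxSign

/-- `aLS`: the `(τ,B,c)`-series is `+` on all positions up to `c`. -/
def aLS (n : ℕ) (τ : Finset ℕ → Bool) (B : Finset ℕ) (c : ℕ) : Prop :=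
  ∀ z ∈ Finset.Icc 1 n \ B.erase c, z ≤ c → τ (insert z (B.erase c)) = true

/-- `aRS`: the `(τ,B,c)`-series is `+` on all positions from `c` on. -/
def aRS (n : ℕ) (τ : Finset ℕ → Bool) (B : Finset ℕ) (c : ℕ) : Prop :=
  ∀ z ∈ Finset.Icc 1 n \ B.erase c, c ≤ z → τ (insert z (B.erase c)) = true

def aLow (n : ℕ) (B : Finset ℕ) (c : ℕ) : Prop :=
  ∀ z ∈ Finset.Icc 1 n, z < c → z ∈ B

def aHigh (n : ℕ) (B : Finset ℕ) (c : ℕ) : Prop :=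
  ∀ z ∈ Finset.Icc 1 n, c < z → z ∈ B

open Classical in
noncomputable def aNE (n : ℕ) (B : Finset ℕ) : Finset ℕ :=
  B.filter fun c => ¬aLow n B c ∧ ¬aHigh n B c

open Classical in
noncomputable def aIota (n : ℕ) (τ : Finset ℕ → Bool) (B : Finset ℕ) : ℕ :=
  (B.filter fun c => aLS n τ B c).card

section AuxCount

lemma aux_card_le_plus {n d : ℕ} {τ : Finset ℕ → Bool} (hco : IsCoSignotope n d τ)
    (F : Finset (Finset ℕ)) (hF : ∀ S ∈ F, τ S = true) : F.card ≤ plusCount τ := by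
  have hfin : {A : Finset ℕ | τ A = true}.Finite :=
    Set.Finite.subset ((Finset.Icc 1 n).powerset.finite_toSet)
      (fun A hA => by
        simp only [Finset.mem_coe, Finset.mem_powerset]
        exact (hco.1 A hA).1)
  rw [plusCount, ← Set.ncard_coe_finset]
  exact Set.ncard_le_ncard (fun A hA => hF A (Finset.mem_coe.mp hA)) hfin

lemma aux_card_image (C : Finset ℕ) (A : Finset ℕ) (hA : ∀ z ∈ A, z ∉ C) :
    (A.image fun z => insert z C).card = A.card := by
  rw [Finset.card_image_of_injOn]
  intro z hz w hw h
  simp only at h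
  have hz' : z ∈ insert w C := by rw [← h]; exact Finset.mem_insert_self z C
  rcases Finset.mem_insert.mp hz' with heq | hzc
  · exact heq
  · exact absurd hzc (hA z (Finset.mem_coe.mp hz))

lemma aux_LS_or_RS {n d : ℕ} {τ : Finset ℕ → Bool} (hco : IsCoSignotope n d τ) (hdn : d < n)
    {B : Finset ℕ} {c : ℕ} (hB : τ B = true) (hc : c ∈ B) :
    aLS n τ B c ∨ aRS n τ B c := by
  obtain ⟨hBU, hBd⟩ := hco.1 B hB
  have hcmem : c ∈ Finset.Icc 1 n \ B.erase c :=
    Finset.mem_sdiff.mpr ⟨hBU hc, Finset.notMem_erase c B⟩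
  have hne : (Finset.Icc 1 n \ B.erase c).Nonempty := ⟨c, hcmem⟩
  have hmmem := Finset.min'_mem _ hne
  have hMmem := Finset.max'_mem _ hne
  have hBeq : τ (insert c (B.erase c)) = true := by rw [Finset.insert_erase hc]; exact hB
  by_cases hm : τ (insert ((Finset.Icc 1 n \ B.erase c).min' hne) (B.erase c)) = true
  · left; intro z hz hzc
    exact aux_between hco hdn hB hc true hmmem hz hcmem (Finset.min'_le _ _ hz) hzc hm hBeq
  · right
    by_cases hM : τ (insert ((Finset.Icc 1 n \ B.erase c).max' hne) (B.erase c)) = true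
    · intro z hz hcz
      exact aux_between hco hdn hB hc true hcmem hz hMmem hcz (Finset.le_max' _ _ hz) hBeq hM
    · exfalso
      simp only [Bool.not_eq_true] at hm hM
      have := aux_between hco hdn hB hc false hmmem hcmem hMmem
        (Finset.min'_le _ _ hcmem) (Finset.le_max' _ _ hcmem) hm hM
      rw [Finset.insert_erase hc, hB] at this
      exact Bool.noConfusion this

lemma aux_not_both {n d p : ℕ} {τ : Finset ℕ → Bool} (hco : IsCoSignotope n d τ) (hdn : d < n)
    (hpc : plusCount τ = p) (hp : p + d ≤ n)
    {B : Finset ℕ} {c : ℕ} (hB : τ B = true) (hc : c ∈ B) :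
    ¬(aLS n τ B c ∧ aRS n τ B c) := by
  rintro ⟨hL, hR⟩
  obtain ⟨hBU, hBd⟩ := hco.1 B hB
  have hCU : B.erase c ⊆ Finset.Icc 1 n := (Finset.erase_subset c B).trans hBU
  have hall : ∀ S ∈ (Finset.Icc 1 n \ B.erase c).image (fun z => insert z (B.erase c)),
      τ S = true := by
    intro S hS
    obtain ⟨z, hz, rfl⟩ := Finset.mem_image.mp hS
    rcases le_total z c with h | h
    · exact hL z hz h
    · exact hR z hz h
  have hcard := aux_card_image (B.erase c) (Finset.Icc 1 n \ B.erase c)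
    (fun z hz => (Finset.mem_sdiff.mp hz).2)
  have hle := aux_card_le_plus hco _ hall
  rw [hcard] at hle
  have hAcard : (Finset.Icc 1 n \ B.erase c).card = n + 1 - 1 - (d - 1) := by
    rw [Finset.card_sdiff_of_subset hCU, Nat.card_Icc, Finset.card_erase_of_mem hc, hBd]
  have hd1 : 1 ≤ d := by have := Finset.card_pos.mpr ⟨c, hc⟩; omega
  omega

lemma aux_prefix {n d p : ℕ} {τ : Finset ℕ → Bool} (hco : IsCoSignotope n d τ) (hdn : d < n)
    (hpc : plusCount τ = p) (hp : p + d ≤ n) {B : Finset ℕ} (hB : τ B = true) {c1 c2 : ℕ}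
    (hc1 : c1 ∈ B) (hc2 : c2 ∈ B) (hlt : c1 < c2) :
    ¬(aRS n τ B c1 ∧ aLS n τ B c2) := by
  rintro ⟨hR, hL⟩
  obtain ⟨hBU, hBd⟩ := hco.1 B hB
  have h1n : 1 ≤ c1 ∧ c1 ≤ n := Finset.mem_Icc.mp (hBU hc1)
  have h2n : 1 ≤ c2 ∧ c2 ≤ n := Finset.mem_Icc.mp (hBU hc2)
  set A1 := Finset.Icc c1 n \ B.erase c1 with hA1
  set A2 := Finset.Icc 1 c2 \ B.erase c2 with hA2
  set F := A1.image (fun z => insert z (B.erase c1)) ∪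
    A2.image (fun w => insert w (B.erase c2)) with hF
  have hFplus : ∀ S ∈ F, τ S = true := by
    intro S hS
    rcases Finset.mem_union.mp hS with h | h
    · obtain ⟨z, hz, rfl⟩ := Finset.mem_image.mp h
      rw [hA1, Finset.mem_sdiff, Finset.mem_Icc] at hz
      exact hR z (Finset.mem_sdiff.mpr
        ⟨Finset.mem_Icc.mpr ⟨le_trans h1n.1 hz.1.1, hz.1.2⟩, hz.2⟩) hz.1.1
    · obtain ⟨w, hw, rfl⟩ := Finset.mem_image.mp h
      rw [hA2, Finset.mem_sdiff, Finset.mem_Icc] at hw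
      exact hL w (Finset.mem_sdiff.mpr
        ⟨Finset.mem_Icc.mpr ⟨hw.1.1, le_trans hw.1.2 h2n.2⟩, hw.2⟩) hw.1.2
  have hFle : F.card ≤ p := hpc ▸ aux_card_le_plus hco F hFplus
  have hi1 : (A1.image (fun z => insert z (B.erase c1))).card = A1.card :=
    aux_card_image _ _ (fun z hz => (Finset.mem_sdiff.mp hz).2)
  have hi2 : (A2.image (fun w => insert w (B.erase c2))).card = A2.card :=
    aux_card_image _ _ (fun w hw => (Finset.mem_sdiff.mp hw).2)
  have hinter : ∀ S ∈ (A1.image (fun z => insert z (B.erase c1))) ∩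
      (A2.image (fun w => insert w (B.erase c2))), S = B := by
    intro S hS
    obtain ⟨hS1, hS2⟩ := Finset.mem_inter.mp hS
    obtain ⟨z, hz, hze⟩ := Finset.mem_image.mp hS1
    obtain ⟨w, hw, hwe⟩ := Finset.mem_image.mp hS2
    have hc1S : c1 ∈ S := by
      rw [← hwe]; exact Finset.mem_insert_of_mem (Finset.mem_erase.mpr ⟨hlt.ne, hc1⟩)
    rw [← hze] at hc1S
    rcases Finset.mem_insert.mp hc1S with h | h
    · rw [← hze, ← h]; exact Finset.insert_erase hc1
    · exact absurd h (Finset.notMem_erase c1 B)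
  have hintercard : ((A1.image (fun z => insert z (B.erase c1))) ∩
      (A2.image (fun w => insert w (B.erase c2)))).card ≤ 1 :=
    Finset.card_le_one.mpr (fun a ha b hb => (hinter a ha).trans (hinter b hb).symm)
  have huni : F.card + ((A1.image (fun z => insert z (B.erase c1))) ∩
      (A2.image (fun w => insert w (B.erase c2)))).card =
      (A1.image (fun z => insert z (B.erase c1))).card +
      (A2.image (fun w => insert w (B.erase c2))).card :=
    Finset.card_union_add_card_inter _ _
  have e1 : A1.card + (Finset.Icc c1 n ∩ B.erase c1).card = n + 1 - c1 := by
    rw [hA1, ← Nat.card_Icc c1 n]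
    exact Finset.card_sdiff_add_card_inter _ _
  have e2 : A2.card + (Finset.Icc 1 c2 ∩ B.erase c2).card = c2 + 1 - 1 := by
    rw [hA2, ← Nat.card_Icc 1 c2]
    exact Finset.card_sdiff_add_card_inter _ _
  have husub : (Finset.Icc c1 n ∩ B.erase c1) ∪ (Finset.Icc 1 c2 ∩ B.erase c2) ⊆ B :=
    Finset.union_subset
      (Finset.inter_subset_right.trans (Finset.erase_subset _ _))
      (Finset.inter_subset_right.trans (Finset.erase_subset _ _))
  have hisub : (Finset.Icc c1 n ∩ B.erase c1) ∩ (Finset.Icc 1 c2 ∩ B.erase c2) ⊆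
      Finset.Ioo c1 c2 := by
    intro w hw
    simp only [Finset.mem_inter, Finset.mem_Icc, Finset.mem_erase] at hw
    exact Finset.mem_Ioo.mpr ⟨lt_of_le_of_ne hw.1.1.1 (Ne.symm hw.1.2.1),
      lt_of_le_of_ne hw.2.1.2 hw.2.2.1⟩
  have hucard := Finset.card_union_add_card_inter (Finset.Icc c1 n ∩ B.erase c1)
    (Finset.Icc 1 c2 ∩ B.erase c2)
  have hub1 := Finset.card_le_card husub
  have hub2 := Finset.card_le_card hisub
  rw [Nat.card_Ioo] at hub2
  rw [hBd] at hub1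
  rw [hi1, hi2] at huni
  omega

end AuxCount

section AuxIota

lemma aux_two_fam {n d p : ℕ} {τ : Finset ℕ → Bool} (hco : IsCoSignotope n d τ)
    (hpc : plusCount τ = p) (hp : p + d ≤ n) {C1 C2 : Finset ℕ} {a : ℕ}
    (hplus1 : ∀ z ∈ Finset.Icc 1 a \ C1, τ (insert z C1) = true)
    (hplus2 : ∀ z ∈ Finset.Icc a n \ C2, τ (insert z C2) = true)
    (hdisj : ∀ z ∈ Finset.Icc 1 a \ C1, ∀ w ∈ Finset.Icc a n \ C2,
      insert z C1 ≠ insert w C2)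
    (hcard : (Finset.Icc 1 a ∩ C1).card + (Finset.Icc a n ∩ C2).card ≤ d)
    (ha1 : 1 ≤ a) (han : a ≤ n) : False := by
  set A1 := Finset.Icc 1 a \ C1 with hA1
  set A2 := Finset.Icc a n \ C2 with hA2
  set F := A1.image (fun z => insert z C1) ∪ A2.image (fun w => insert w C2) with hF
  have hFplus : ∀ S ∈ F, τ S = true := by
    intro S hS
    rcases Finset.mem_union.mp hS with h | h
    · obtain ⟨z, hz, rfl⟩ := Finset.mem_image.mp h
      exact hplus1 z hz
    · obtain ⟨w, hw, rfl⟩ := Finset.mem_image.mp h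
      exact hplus2 w hw
  have hFle : F.card ≤ p := hpc ▸ aux_card_le_plus hco F hFplus
  have hi1 : (A1.image (fun z => insert z C1)).card = A1.card :=
    aux_card_image _ _ (fun z hz => (Finset.mem_sdiff.mp hz).2)
  have hi2 : (A2.image (fun w => insert w C2)).card = A2.card :=
    aux_card_image _ _ (fun w hw => (Finset.mem_sdiff.mp hw).2)
  have hdis : Disjoint (A1.image (fun z => insert z C1)) (A2.image (fun w => insert w C2)) := by
    rw [Finset.disjoint_left]
    intro S hS1 hS2
    obtain ⟨z, hz, hze⟩ := Finset.mem_image.mp hS1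
    obtain ⟨w, hw, hwe⟩ := Finset.mem_image.mp hS2
    exact hdisj z hz w hw (hze.trans hwe.symm)
  have huni : F.card = (A1.image (fun z => insert z C1)).card +
      (A2.image (fun w => insert w C2)).card := Finset.card_union_of_disjoint hdis
  have e1 : A1.card + (Finset.Icc 1 a ∩ C1).card = a + 1 - 1 := by
    rw [hA1, ← Nat.card_Icc 1 a]
    exact Finset.card_sdiff_add_card_inter _ _
  have e2 : A2.card + (Finset.Icc a n ∩ C2).card = n + 1 - a := by
    rw [hA2, ← Nat.card_Icc a n]
    exact Finset.card_sdiff_add_card_inter _ _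
  rw [hi1, hi2] at huni
  omega

lemma aux_ubound {n d : ℕ} {B : Finset ℕ} {x y c : ℕ} (hBd : B.card = d)
    (hyB : y ∉ B) (hc : c ∈ B) (hcx : c ≠ x) :
    (Finset.Icc 1 c ∩ B.erase c).card +
      (Finset.Icc c n ∩ (insert y (B.erase x)).erase c).card ≤ d ∧
    (Finset.Icc 1 c ∩ (insert y (B.erase x)).erase c).card +
      (Finset.Icc c n ∩ B.erase c).card ≤ d := by
  have hbig : B.erase c ⊆ (insert y B).erase c :=
    Finset.erase_subset_erase c (Finset.subset_insert y B)
  have hbig' : (insert y (B.erase x)).erase c ⊆ (insert y B).erase c :=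
    Finset.erase_subset_erase c (Finset.insert_subset_insert y (Finset.erase_subset x B))
  have hWcard : ((insert y B).erase c).card = d := by
    rw [Finset.card_erase_of_mem (Finset.mem_insert_of_mem hc),
      Finset.card_insert_of_notMem hyB, hBd]
    omega
  constructor
  · have hdisj : Disjoint (Finset.Icc 1 c ∩ B.erase c)
        (Finset.Icc c n ∩ (insert y (B.erase x)).erase c) := by
      rw [Finset.disjoint_left]
      intro w hw1 hw2
      simp only [Finset.mem_inter, Finset.mem_Icc, Finset.mem_erase] at hw1 hw2
      have : w = c := le_antisymm hw1.1.2 hw2.1.1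
      exact hw1.2.1 this
    have hsub : (Finset.Icc 1 c ∩ B.erase c) ∪
        (Finset.Icc c n ∩ (insert y (B.erase x)).erase c) ⊆ (insert y B).erase c :=
      Finset.union_subset (Finset.inter_subset_right.trans hbig)
        (Finset.inter_subset_right.trans hbig')
    have := Finset.card_le_card hsub
    rw [Finset.card_union_of_disjoint hdisj, hWcard] at this
    exact this
  · have hdisj : Disjoint (Finset.Icc 1 c ∩ (insert y (B.erase x)).erase c)
        (Finset.Icc c n ∩ B.erase c) := by
      rw [Finset.disjoint_left]
      intro w hw1 hw2
      simp only [Finset.mem_inter, Finset.mem_Icc, Finset.mem_erase] at hw1 hw2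
      have : w = c := le_antisymm hw1.1.2 hw2.1.1
      exact hw1.2.1 this
    have hsub : (Finset.Icc 1 c ∩ (insert y (B.erase x)).erase c) ∪
        (Finset.Icc c n ∩ B.erase c) ⊆ (insert y B).erase c :=
      Finset.union_subset (Finset.inter_subset_right.trans hbig')
        (Finset.inter_subset_right.trans hbig)
    have := Finset.card_le_card hsub
    rw [Finset.card_union_of_disjoint hdisj, hWcard] at this
    exact this

lemma aux_edge_LR {n d p : ℕ} {τ : Finset ℕ → Bool} (hco : IsCoSignotope n d τ) (hdn : d < n)
    (hpc : plusCount τ = p) (hp : p + d ≤ n) {B : Finset ℕ} {x y c : ℕ}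
    (hB : τ B = true) (hx : x ∈ B) (hyU : y ∈ Finset.Icc 1 n) (hyB : y ∉ B) (hxy : x < y)
    (hB' : τ (insert y (B.erase x)) = true) (hc : c ∈ B) (hcx : c ≠ x) :
    ¬(aLS n τ B c ∧ aRS n τ (insert y (B.erase x)) c) := by
  rintro ⟨hL, hR⟩
  obtain ⟨hBU, hBd⟩ := hco.1 B hB
  have hcn : 1 ≤ c ∧ c ≤ n := Finset.mem_Icc.mp (hBU hc)
  have hyc : y ≠ c := fun h => hyB (h ▸ hc)
  have hxny : x ≠ y := hxy.ne
  apply aux_two_fam hco hpc hp (C1 := B.erase c) (C2 := (insert y (B.erase x)).erase c)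
    (a := c) ?_ ?_ ?_ ((aux_ubound hBd hyB hc hcx).1) hcn.1 hcn.2
  · intro z hz
    rw [Finset.mem_sdiff, Finset.mem_Icc] at hz
    exact hL z (Finset.mem_sdiff.mpr
      ⟨Finset.mem_Icc.mpr ⟨hz.1.1, le_trans hz.1.2 hcn.2⟩, hz.2⟩) hz.1.2
  · intro w hw
    rw [Finset.mem_sdiff, Finset.mem_Icc] at hw
    exact hR w (Finset.mem_sdiff.mpr
      ⟨Finset.mem_Icc.mpr ⟨le_trans hcn.1 hw.1.1, hw.1.2⟩, hw.2⟩) hw.1.1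
  · intro z hz w hw heq
    rw [Finset.mem_sdiff, Finset.mem_Icc] at hz hw
    have hyS : y ∈ insert z (B.erase c) := by
      rw [heq]
      exact Finset.mem_insert_of_mem (Finset.mem_erase.mpr ⟨hyc, Finset.mem_insert_self y _⟩)
    have hzy : z = y := by
      rcases Finset.mem_insert.mp hyS with h | h
      · exact h.symm
      · exact absurd (Finset.mem_of_mem_erase h) hyB
    have hylt : y < c := by
      have hyle : y ≤ c := by rw [← hzy]; exact hz.1.2
      exact lt_of_le_of_ne hyle hyc
    have hxS : x ∈ insert w ((insert y (B.erase x)).erase c) := by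
      rw [← heq]
      exact Finset.mem_insert_of_mem (Finset.mem_erase.mpr ⟨Ne.symm hcx, hx⟩)
    have hwx : w = x := by
      rcases Finset.mem_insert.mp hxS with h | h
      · exact h.symm
      · have hxB' := Finset.mem_of_mem_erase h
        rcases Finset.mem_insert.mp hxB' with h2 | h2
        · exact absurd h2 hxny
        · exact absurd h2 (Finset.notMem_erase x B)
    have hxgt : c < x := by
      have hcle : c ≤ x := by rw [← hwx]; exact hw.1.1
      exact lt_of_le_of_ne hcle hcx
    omega

lemma aux_edge_RL {n d p : ℕ} {τ : Finset ℕ → Bool} (hco : IsCoSignotope n d τ) (hdn : d < n)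
    (hpc : plusCount τ = p) (hp : p + d ≤ n) {B : Finset ℕ} {x y c : ℕ}
    (hB : τ B = true) (hx : x ∈ B) (hyU : y ∈ Finset.Icc 1 n) (hyB : y ∉ B) (hxy : x < y)
    (hgap : ∀ z ∈ B.erase x, ¬(x < z ∧ z < y))
    (hB' : τ (insert y (B.erase x)) = true) (hc : c ∈ B) (hcx : c ≠ x) :
    ¬(aRS n τ B c ∧ aLS n τ (insert y (B.erase x)) c) := by
  rintro ⟨hR, hL⟩
  obtain ⟨hBU, hBd⟩ := hco.1 B hB
  have hcn : 1 ≤ c ∧ c ≤ n := Finset.mem_Icc.mp (hBU hc)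
  have hyc : y ≠ c := fun h => hyB (h ▸ hc)
  have hxny : x ≠ y := hxy.ne
  apply aux_two_fam hco hpc hp (C1 := (insert y (B.erase x)).erase c) (C2 := B.erase c)
    (a := c) ?_ ?_ ?_ ((aux_ubound hBd hyB hc hcx).2) hcn.1 hcn.2
  · intro z hz
    rw [Finset.mem_sdiff, Finset.mem_Icc] at hz
    exact hL z (Finset.mem_sdiff.mpr
      ⟨Finset.mem_Icc.mpr ⟨hz.1.1, le_trans hz.1.2 hcn.2⟩, hz.2⟩) hz.1.2
  · intro w hw
    rw [Finset.mem_sdiff, Finset.mem_Icc] at hw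
    exact hR w (Finset.mem_sdiff.mpr
      ⟨Finset.mem_Icc.mpr ⟨le_trans hcn.1 hw.1.1, hw.1.2⟩, hw.2⟩) hw.1.1
  · intro z hz w hw heq
    rw [Finset.mem_sdiff, Finset.mem_Icc] at hz hw
    have hyS : y ∈ insert w (B.erase c) := by
      rw [← heq]
      exact Finset.mem_insert_of_mem (Finset.mem_erase.mpr ⟨hyc, Finset.mem_insert_self y _⟩)
    have hwy : w = y := by
      rcases Finset.mem_insert.mp hyS with h | h
      · exact h.symm
      · exact absurd (Finset.mem_of_mem_erase h) hyB
    have hygt : c < y := by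
      have : c ≤ y := by rw [← hwy]; exact hw.1.1
      exact lt_of_le_of_ne this (Ne.symm hyc)
    have hxS : x ∈ insert z ((insert y (B.erase x)).erase c) := by
      rw [heq]
      exact Finset.mem_insert_of_mem (Finset.mem_erase.mpr ⟨Ne.symm hcx, hx⟩)
    have hzx : z = x := by
      rcases Finset.mem_insert.mp hxS with h | h
      · exact h.symm
      · have hxB' := Finset.mem_of_mem_erase h
        rcases Finset.mem_insert.mp hxB' with h2 | h2
        · exact absurd h2 hxny
        · exact absurd h2 (Finset.notMem_erase x B)
    have hxlt : x < c := by
      have : x ≤ c := by rw [← hzx]; exact hz.1.2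
      exact lt_of_le_of_ne this (Ne.symm hcx)
    exact hgap c (Finset.mem_erase.mpr ⟨hcx, hc⟩) ⟨hxlt, hygt⟩

end AuxIota

section AuxIota2
open Classical

lemma aux_edge_iff {n d p : ℕ} {τ : Finset ℕ → Bool} (hco : IsCoSignotope n d τ) (hdn : d < n)
    (hpc : plusCount τ = p) (hp : p + d ≤ n) {B : Finset ℕ} {x y c : ℕ}
    (hB : τ B = true) (hx : x ∈ B) (hyU : y ∈ Finset.Icc 1 n) (hyB : y ∉ B) (hxy : x < y)
    (hgap : ∀ z ∈ B.erase x, ¬(x < z ∧ z < y))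
    (hB' : τ (insert y (B.erase x)) = true) (hc : c ∈ B) (hcx : c ≠ x) :
    aLS n τ B c ↔ aLS n τ (insert y (B.erase x)) c := by
  have hcB' : c ∈ insert y (B.erase x) :=
    Finset.mem_insert_of_mem (Finset.mem_erase.mpr ⟨hcx, hc⟩)
  constructor
  · intro hL
    rcases aux_LS_or_RS hco hdn hB' hcB' with h | h
    · exact h
    · exact absurd ⟨hL, h⟩ (aux_edge_LR hco hdn hpc hp hB hx hyU hyB hxy hB' hc hcx)
  · intro hL'
    rcases aux_LS_or_RS hco hdn hB hc with h | h
    · exact h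
    · exact absurd ⟨h, hL'⟩ (aux_edge_RL hco hdn hpc hp hB hx hyU hyB hxy hgap hB' hc hcx)

lemma aux_moved {n d : ℕ} {τ : Finset ℕ → Bool} (hco : IsCoSignotope n d τ) (hdn : d < n)
    {B : Finset ℕ} {x y : ℕ}
    (hB : τ B = true) (hx : x ∈ B) (hyU : y ∈ Finset.Icc 1 n) (hyB : y ∉ B)
    (hB' : τ (insert y (B.erase x)) = true) :
    aLS n τ B x ↔ aLS n τ (insert y (B.erase x)) y := by
  obtain ⟨hBU, hBd⟩ := hco.1 B hB
  have hyBe : y ∉ B.erase x := fun h => hyB (Finset.mem_of_mem_erase h)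
  have hkey : (insert y (B.erase x)).erase y = B.erase x := Finset.erase_insert hyBe
  have hxmem : x ∈ Finset.Icc 1 n \ B.erase x :=
    Finset.mem_sdiff.mpr ⟨hBU hx, Finset.notMem_erase x B⟩
  have hymem : y ∈ Finset.Icc 1 n \ B.erase x := Finset.mem_sdiff.mpr ⟨hyU, hyBe⟩
  have hne : (Finset.Icc 1 n \ B.erase x).Nonempty := ⟨x, hxmem⟩
  have hmmem := Finset.min'_mem _ hne
  have hBx : τ (insert x (B.erase x)) = true := by rw [Finset.insert_erase hx]; exact hB
  constructor
  · intro hL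
    have hm := hL _ hmmem (Finset.min'_le _ _ hxmem)
    intro z hz hzy
    rw [hkey] at hz ⊢
    exact aux_between hco hdn hB hx true hmmem hz hymem (Finset.min'_le _ _ hz) hzy hm hB'
  · intro hL'
    have hm : τ (insert ((Finset.Icc 1 n \ B.erase x).min' hne) (B.erase x)) = true := by
      have := hL' _ (by rw [hkey]; exact hmmem) (Finset.min'_le _ _ hymem)
      rwa [hkey] at this
    intro z hz hzx
    exact aux_between hco hdn hB hx true hmmem hz hxmem (Finset.min'_le _ _ hz) hzx hm hBx

lemma aux_filter_split {B : Finset ℕ} {x : ℕ} (hx : x ∈ B) (P : ℕ → Prop)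
    [DecidablePred P] :
    (B.filter P).card = (if P x then 1 else 0) + ((B.erase x).filter P).card := by
  conv_lhs => rw [← Finset.insert_erase hx]
  rw [Finset.filter_insert]
  split_ifs with h
  · rw [Finset.card_insert_of_notMem (fun hmem =>
      Finset.notMem_erase x B (Finset.mem_of_mem_filter x hmem))]
    omega
  · omega

lemma aux_iota_split {n : ℕ} {τ : Finset ℕ → Bool} {B : Finset ℕ} {x : ℕ} (hx : x ∈ B) :
    aIota n τ B = (if aLS n τ B x then 1 else 0) +
      ((B.erase x).filter (fun c => aLS n τ B c)).card := by
  unfold aIota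
  exact aux_filter_split hx _

lemma aux_iota_edge {n d p : ℕ} {τ : Finset ℕ → Bool} (hco : IsCoSignotope n d τ) (hdn : d < n)
    (hpc : plusCount τ = p) (hp : p + d ≤ n) {B B' : Finset ℕ}
    (hB : τ B = true) (hB' : τ B' = true) (hadj : GAdj n d B B') :
    aIota n τ B = aIota n τ B' := by
  obtain ⟨hBU, hBd, hB'U, hB'd, x, hx, y, hyU, hyB, heq, hgap⟩ := hadj
  have hxny : x ≠ y := fun h => hyB (h ▸ hx)
  have hyBe : y ∉ B.erase x := fun h => hyB (Finset.mem_of_mem_erase h)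
  have hkey : B'.erase y = B.erase x := by rw [heq, Finset.erase_insert hyBe]
  have hyB' : y ∈ B' := by rw [heq]; exact Finset.mem_insert_self y _
  have hB'e : τ (insert y (B.erase x)) = true := by rw [← heq]; exact hB'
  have hmoved : aLS n τ B x ↔ aLS n τ B' y := by
    rw [heq]; exact aux_moved hco hdn hB hx hyU hyB hB'e
  have hcomm : ∀ c ∈ B.erase x, (aLS n τ B c ↔ aLS n τ B' c) := by
    intro c hcmem
    obtain ⟨hcx, hcB⟩ := Finset.mem_erase.mp hcmem
    rcases lt_or_gt_of_ne hxny with hlt | hgt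
    · have hgap' : ∀ z ∈ B.erase x, ¬(x < z ∧ z < y) := by
        intro z hz
        have := hgap z hz
        rwa [min_eq_left hlt.le, max_eq_right hlt.le] at this
      rw [heq]
      exact aux_edge_iff hco hdn hpc hp hB hx hyU hyB hlt hgap' hB'e hcB hcx
    · have hxB' : x ∉ B' := by
        rw [heq]
        intro hmem
        rcases Finset.mem_insert.mp hmem with h | h
        · exact hxny h
        · exact Finset.notMem_erase x B h
      have hgap' : ∀ z ∈ B'.erase y, ¬(y < z ∧ z < x) := by
        intro z hz
        rw [hkey] at hz
        have := hgap z hz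
        rwa [min_eq_right hgt.le, max_eq_left hgt.le] at this
      have hBeq : B = insert x (B'.erase y) := by rw [hkey, Finset.insert_erase hx]
      have hBe2 : τ (insert x (B'.erase y)) = true := by rw [← hBeq]; exact hB
      have hcB' : c ∈ B' := by rw [heq]; exact Finset.mem_insert_of_mem hcmem
      have hcy : c ≠ y := fun h => hyB (h ▸ hcB)
      have hiff := aux_edge_iff hco hdn hpc hp hB' hyB' (hBU hx) hxB' hgt hgap' hBe2 hcB' hcy
      rw [← hBeq] at hiff
      exact hiff.symm
  rw [aux_iota_split hx, aux_iota_split hyB', hkey]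
  congr 1
  · simp only [hmoved]
  · exact congrArg Finset.card (Finset.filter_congr hcomm)

lemma aux_iota_conn {n d p : ℕ} {τ : Finset ℕ → Bool} (hco : IsCoSignotope n d τ) (hdn : d < n)
    (hpc : plusCount τ = p) (hp : p + d ≤ n) {A A' : Finset ℕ}
    (h : plusConn n d τ A A') : aIota n τ A = aIota n τ A' := by
  have h' : Relation.ReflTransGen
      (fun X Y => τ X = true ∧ τ Y = true ∧ GAdj n d X Y) A A' := h
  clear h
  induction h' with
  | refl => rfl
  | tail hst hrel ih => exact ih.trans (aux_iota_edge hco hdn hpc hp hrel.1 hrel.2.1 hrel.2.2)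

lemma aux_iota_source {n d p : ℕ} {τ : Finset ℕ → Bool} (hco : IsCoSignotope n d τ)
    (hdn : d < n) (hpc : plusCount τ = p) (hp : p + d ≤ n) {i : ℕ} (hid : i ≤ d)
    (hS : τ (sourceSubset n d i) = true) : aIota n τ (sourceSubset n d i) = i := by
  set S := sourceSubset n d i with hSdef
  have hmemS : ∀ c, c ∈ S ↔ (1 ≤ c ∧ c ≤ i) ∨ (n - d + i + 1 ≤ c ∧ c ≤ n) := by
    intro c
    simp [hSdef, sourceSubset, Finset.mem_union, Finset.mem_Icc]
  have hlow : ∀ c, 1 ≤ c → c ≤ i → aLS n τ S c := by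
    intro c h1 h2 z hz hzc
    rw [Finset.mem_sdiff] at hz
    have hzU := Finset.mem_Icc.mp hz.1
    have hzeq : z = c := by
      by_contra hne
      exact hz.2 (Finset.mem_erase.mpr
        ⟨hne, (hmemS z).mpr (Or.inl ⟨hzU.1, by omega⟩)⟩)
    rw [hzeq, Finset.insert_erase ((hmemS c).mpr (Or.inl ⟨h1, h2⟩))]
    exact hS
  have hhigh : ∀ c, n - d + i + 1 ≤ c → c ≤ n → aRS n τ S c := by
    intro c h1 h2 z hz hcz
    rw [Finset.mem_sdiff] at hz
    have hzU := Finset.mem_Icc.mp hz.1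
    have hzeq : z = c := by
      by_contra hne
      exact hz.2 (Finset.mem_erase.mpr
        ⟨hne, (hmemS z).mpr (Or.inr ⟨by omega, hzU.2⟩)⟩)
    rw [hzeq, Finset.insert_erase ((hmemS c).mpr (Or.inr ⟨h1, h2⟩))]
    exact hS
  have hfil : S.filter (fun c => aLS n τ S c) = Finset.Icc 1 i := by
    ext c
    simp only [Finset.mem_filter, Finset.mem_Icc]
    constructor
    · rintro ⟨hcS, hcL⟩
      rcases (hmemS c).mp hcS with h | h
      · exact h
      · exact absurd ⟨hcL, hhigh c h.1 h.2⟩ (aux_not_both hco hdn hpc hp hS hcS)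
    · rintro ⟨h1, h2⟩
      exact ⟨(hmemS c).mpr (Or.inl ⟨h1, h2⟩), hlow c h1 h2⟩
  unfold aIota
  rw [hfil, Nat.card_Icc]
  omega

end AuxIota2

section AuxSettled
open Classical

lemma aux_dc_icc (L : Finset ℕ) (h1 : ∀ c ∈ L, 1 ≤ c)
    (hdc : ∀ c ∈ L, ∀ w, 1 ≤ w → w ≤ c → w ∈ L) : L = Finset.Icc 1 L.card := by
  rcases L.eq_empty_or_nonempty with h | h
  · simp [h]
  · have hM : L = Finset.Icc 1 (L.max' h) := by
      ext w
      simp only [Finset.mem_Icc]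
      constructor
      · intro hw; exact ⟨h1 w hw, Finset.le_max' L w hw⟩
      · rintro ⟨hw1, hw2⟩; exact hdc _ (L.max'_mem h) w hw1 hw2
    have hc := congrArg Finset.card hM
    rw [Nat.card_Icc] at hc
    conv_lhs => rw [hM]
    congr 1
    omega

lemma aux_uc_icc (n : ℕ) (H : Finset ℕ) (h1 : ∀ c ∈ H, c ≤ n)
    (huc : ∀ c ∈ H, ∀ w, w ≤ n → c ≤ w → w ∈ H) :
    H = Finset.Icc (n + 1 - H.card) n := by
  rcases H.eq_empty_or_nonempty with h | h
  · rw [h]; simp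
  · have hm : H = Finset.Icc (H.min' h) n := by
      ext w
      simp only [Finset.mem_Icc]
      constructor
      · intro hw; exact ⟨Finset.min'_le H w hw, h1 w hw⟩
      · rintro ⟨hw1, hw2⟩; exact huc _ (H.min'_mem h) w hw2 hw1
    have hc := congrArg Finset.card hm
    rw [Nat.card_Icc] at hc
    have hmn : H.min' h ≤ n := h1 _ (H.min'_mem h)
    conv_lhs => rw [hm]
    congr 1
    omega

lemma aux_settled {n d : ℕ} (hdn : d < n) {B : Finset ℕ} (hBU : B ⊆ Finset.Icc 1 n)
    (hBd : B.card = d) (hset : ∀ c ∈ B, aLow n B c ∨ aHigh n B c) :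
    ∃ i ≤ d, B = sourceSubset n d i := by
  set L := B.filter (fun c => aLow n B c) with hLdef
  set H := B.filter (fun c => aHigh n B c) with hHdef
  have hrange : ∀ c ∈ B, 1 ≤ c ∧ c ≤ n := fun c hc => Finset.mem_Icc.mp (hBU hc)
  have hdisj0 : ∀ c ∈ B, aLow n B c → aHigh n B c → False := by
    intro c hc hlo hhi
    have hsub : Finset.Icc 1 n ⊆ B := by
      intro z hz
      rcases lt_trichotomy z c with h | h | h
      · exact hlo z hz h
      · exact h ▸ hc
      · exact hhi z hz h
    have hcard := Finset.card_le_card hsub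
    rw [Nat.card_Icc, hBd] at hcard
    omega
  have hLicc : L = Finset.Icc 1 L.card := by
    apply aux_dc_icc
    · intro c hc; exact (hrange c (Finset.mem_filter.mp hc).1).1
    · intro c hc w hw1 hwc
      obtain ⟨hcB, hclow⟩ := Finset.mem_filter.mp hc
      rcases eq_or_lt_of_le hwc with heq | hlt
      · exact heq ▸ hc
      · have hwn : w ≤ n := le_trans (le_of_lt hlt) (hrange c hcB).2
        have hwB : w ∈ B := hclow w (Finset.mem_Icc.mpr ⟨hw1, hwn⟩) hlt
        refine Finset.mem_filter.mpr ⟨hwB, ?_⟩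
        intro z hz hzw
        exact hclow z hz (lt_trans hzw hlt)
  have hHicc : H = Finset.Icc (n + 1 - H.card) n := by
    apply aux_uc_icc
    · intro c hc; exact (hrange c (Finset.mem_filter.mp hc).1).2
    · intro c hc w hwn hcw
      obtain ⟨hcB, hchigh⟩ := Finset.mem_filter.mp hc
      rcases eq_or_lt_of_le hcw with heq | hlt
      · exact heq ▸ hc
      · have hw1 : 1 ≤ w := le_trans (hrange c hcB).1 (le_of_lt hlt)
        have hwB : w ∈ B := hchigh w (Finset.mem_Icc.mpr ⟨hw1, hwn⟩) hlt
        refine Finset.mem_filter.mpr ⟨hwB, ?_⟩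
        intro z hz hwz
        exact hchigh z hz (lt_trans hlt hwz)
  have hBLH : B = L ∪ H := by
    ext c
    constructor
    · intro hc
      rcases hset c hc with h | h
      · exact Finset.mem_union_left _ (Finset.mem_filter.mpr ⟨hc, h⟩)
      · exact Finset.mem_union_right _ (Finset.mem_filter.mpr ⟨hc, h⟩)
    · intro hc
      rcases Finset.mem_union.mp hc with h | h
      · exact (Finset.mem_filter.mp h).1
      · exact (Finset.mem_filter.mp h).1
  have hdisj : Disjoint L H := by
    rw [Finset.disjoint_left]
    intro c hcL hcH
    exact hdisj0 c (Finset.mem_filter.mp hcL).1 (Finset.mem_filter.mp hcL).2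
      (Finset.mem_filter.mp hcH).2
  have hcards : L.card + H.card = d := by
    rw [← hBd, hBLH, Finset.card_union_of_disjoint hdisj]
  obtain ⟨j, hj⟩ : ∃ j, H.card = j := ⟨_, rfl⟩
  obtain ⟨i, hi⟩ : ∃ i, L.card = i := ⟨_, rfl⟩
  rw [hi] at hLicc
  rw [hj] at hHicc
  rw [hi, hj] at hcards
  refine ⟨i, by omega, ?_⟩
  rw [hBLH, hLicc, hHicc]
  unfold sourceSubset
  congr 1
  congr 1
  omega

end AuxSettled

section AuxMove
open Classical

lemma aux_down_move {n d : ℕ} {τ : Finset ℕ → Bool} (hco : IsCoSignotope n d τ) (hdn : d < n)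
    {B : Finset ℕ} (hB : τ B = true) {c : ℕ} (hc : c ∈ B)
    (hnl : ¬aLow n B c) (hnh : ¬aHigh n B c)
    (hmin : ∀ w ∈ B, w < c → aLow n B w)
    (hLS : aLS n τ B c) :
    ∃ B', τ B' = true ∧ GAdj n d B B' ∧ aNE n B' ⊆ (aNE n B).erase c := by
  obtain ⟨hBU, hBd⟩ := hco.1 B hB
  have hne : (Finset.Icc 1 n \ B).Nonempty := by
    rw [← Finset.card_pos, Finset.card_sdiff_of_subset hBU, Nat.card_Icc]
    omega
  set y := (Finset.Icc 1 n \ B).min' hne with hy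
  obtain ⟨hyU, hyB⟩ := Finset.mem_sdiff.mp (Finset.min'_mem _ hne)
  have hminc : ∀ z ∈ Finset.Icc 1 n, z < y → z ∈ B := by
    intro z hz hzy
    by_contra hzB
    have := Finset.min'_le _ z (Finset.mem_sdiff.mpr ⟨hz, hzB⟩)
    omega
  have hylt : y < c := by
    rcases lt_trichotomy y c with h | h | h
    · exact h
    · exact absurd (show y ∈ B by rw [h]; exact hc) hyB
    · exfalso
      apply hnl
      intro z hz hzc
      exact hminc z hz (lt_trans hzc h)
  have hnobet : ∀ w ∈ B, ¬(y < w ∧ w < c) := by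
    rintro w hw ⟨h1, h2⟩
    exact hyB (hmin w hw h2 y hyU h1)
  have hyBe : y ∉ B.erase c := fun h => hyB (Finset.mem_of_mem_erase h)
  have hτB' : τ (insert y (B.erase c)) = true :=
    hLS y (Finset.mem_sdiff.mpr ⟨hyU, hyBe⟩) (le_of_lt hylt)
  have hd1 : 1 ≤ d := by have := Finset.card_pos.mpr ⟨c, hc⟩; omega
  have hB'U : insert y (B.erase c) ⊆ Finset.Icc 1 n :=
    Finset.insert_subset hyU ((Finset.erase_subset _ _).trans hBU)
  have hB'd : (insert y (B.erase c)).card = d := by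
    rw [Finset.card_insert_of_notMem hyBe, Finset.card_erase_of_mem hc, hBd]
    omega
  have hadj : GAdj n d B (insert y (B.erase c)) := by
    refine ⟨hBU, hBd, hB'U, hB'd, c, hc, y, hyU, hyB, rfl, ?_⟩
    intro z hz hcon
    rw [min_eq_right (le_of_lt hylt), max_eq_left (le_of_lt hylt)] at hcon
    exact hnobet z (Finset.mem_of_mem_erase hz) ⟨hcon.1, hcon.2⟩
  refine ⟨insert y (B.erase c), hτB', hadj, ?_⟩
  intro w hw
  obtain ⟨hwB', hwne⟩ := Finset.mem_filter.mp hw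
  have hwy : w ≠ y := by
    rintro rfl
    apply hwne.1
    intro z hz hzy
    exact Finset.mem_insert_of_mem (Finset.mem_erase.mpr ⟨by omega, hminc z hz hzy⟩)
  have hwB : w ∈ B ∧ w ≠ c := by
    rcases Finset.mem_insert.mp hwB' with h | h
    · exact absurd h hwy
    · exact ⟨Finset.mem_of_mem_erase h, (Finset.mem_erase.mp h).1⟩
  have hwnl : ¬aLow n B w := by
    intro hlo
    apply hwne.1
    intro z hz hzw
    have hzB := hlo z hz hzw
    have hzc : z ≠ c := by
      rintro rfl
      exact hnl (fun z' hz' hz'c => hlo z' hz' (lt_trans hz'c hzw))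
    exact Finset.mem_insert_of_mem (Finset.mem_erase.mpr ⟨hzc, hzB⟩)
  have hwnh : ¬aHigh n B w := by
    intro hhi
    apply hwne.2
    intro z hz hwz
    have hzB := hhi z hz hwz
    have hzc : z ≠ c := by
      rintro rfl
      exact hnh (fun z' hz' hcz' => hhi z' hz' (lt_trans hwz hcz'))
    exact Finset.mem_insert_of_mem (Finset.mem_erase.mpr ⟨hzc, hzB⟩)
  exact Finset.mem_erase.mpr ⟨hwB.2, Finset.mem_filter.mpr ⟨hwB.1, hwnl, hwnh⟩⟩

lemma aux_up_move {n d : ℕ} {τ : Finset ℕ → Bool} (hco : IsCoSignotope n d τ) (hdn : d < n)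
    {B : Finset ℕ} (hB : τ B = true) {c : ℕ} (hc : c ∈ B)
    (hnl : ¬aLow n B c) (hnh : ¬aHigh n B c)
    (hmax : ∀ w ∈ B, c < w → aHigh n B w)
    (hRS : aRS n τ B c) :
    ∃ B', τ B' = true ∧ GAdj n d B B' ∧ aNE n B' ⊆ (aNE n B).erase c := by
  obtain ⟨hBU, hBd⟩ := hco.1 B hB
  have hne : (Finset.Icc 1 n \ B).Nonempty := by
    rw [← Finset.card_pos, Finset.card_sdiff_of_subset hBU, Nat.card_Icc]
    omega
  set y := (Finset.Icc 1 n \ B).max' hne with hy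
  obtain ⟨hyU, hyB⟩ := Finset.mem_sdiff.mp (Finset.max'_mem _ hne)
  have hmaxc : ∀ z ∈ Finset.Icc 1 n, y < z → z ∈ B := by
    intro z hz hyz
    by_contra hzB
    have := Finset.le_max' _ z (Finset.mem_sdiff.mpr ⟨hz, hzB⟩)
    omega
  have hylt : c < y := by
    rcases lt_trichotomy c y with h | h | h
    · exact h
    · exact absurd (show y ∈ B by rw [← h]; exact hc) hyB
    · exfalso
      apply hnh
      intro z hz hcz
      exact hmaxc z hz (lt_trans h hcz)
  have hnobet : ∀ w ∈ B, ¬(c < w ∧ w < y) := by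
    rintro w hw ⟨h1, h2⟩
    exact hyB (hmax w hw h1 y hyU h2)
  have hyBe : y ∉ B.erase c := fun h => hyB (Finset.mem_of_mem_erase h)
  have hτB' : τ (insert y (B.erase c)) = true :=
    hRS y (Finset.mem_sdiff.mpr ⟨hyU, hyBe⟩) (le_of_lt hylt)
  have hd1 : 1 ≤ d := by have := Finset.card_pos.mpr ⟨c, hc⟩; omega
  have hB'U : insert y (B.erase c) ⊆ Finset.Icc 1 n :=
    Finset.insert_subset hyU ((Finset.erase_subset _ _).trans hBU)
  have hB'd : (insert y (B.erase c)).card = d := by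
    rw [Finset.card_insert_of_notMem hyBe, Finset.card_erase_of_mem hc, hBd]
    omega
  have hadj : GAdj n d B (insert y (B.erase c)) := by
    refine ⟨hBU, hBd, hB'U, hB'd, c, hc, y, hyU, hyB, rfl, ?_⟩
    intro z hz hcon
    rw [min_eq_left (le_of_lt hylt), max_eq_right (le_of_lt hylt)] at hcon
    exact hnobet z (Finset.mem_of_mem_erase hz) ⟨hcon.1, hcon.2⟩
  refine ⟨insert y (B.erase c), hτB', hadj, ?_⟩
  intro w hw
  obtain ⟨hwB', hwne⟩ := Finset.mem_filter.mp hw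
  have hwy : w ≠ y := by
    rintro rfl
    apply hwne.2
    intro z hz hyz
    exact Finset.mem_insert_of_mem (Finset.mem_erase.mpr ⟨by omega, hmaxc z hz hyz⟩)
  have hwB : w ∈ B ∧ w ≠ c := by
    rcases Finset.mem_insert.mp hwB' with h | h
    · exact absurd h hwy
    · exact ⟨Finset.mem_of_mem_erase h, (Finset.mem_erase.mp h).1⟩
  have hwnl : ¬aLow n B w := by
    intro hlo
    apply hwne.1
    intro z hz hzw
    have hzB := hlo z hz hzw
    have hzc : z ≠ c := by
      rintro rfl
      exact hnl (fun z' hz' hz'c => hlo z' hz' (lt_trans hz'c hzw))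
    exact Finset.mem_insert_of_mem (Finset.mem_erase.mpr ⟨hzc, hzB⟩)
  have hwnh : ¬aHigh n B w := by
    intro hhi
    apply hwne.2
    intro z hz hwz
    have hzB := hhi z hz hwz
    have hzc : z ≠ c := by
      rintro rfl
      exact hnh (fun z' hz' hcz' => hhi z' hz' (lt_trans hwz hcz'))
    exact Finset.mem_insert_of_mem (Finset.mem_erase.mpr ⟨hzc, hzB⟩)
  exact Finset.mem_erase.mpr ⟨hwB.2, Finset.mem_filter.mpr ⟨hwB.1, hwnl, hwnh⟩⟩

end AuxMove

section AuxMain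
open Classical

lemma aux_exists {n d p : ℕ} {τ : Finset ℕ → Bool} (hco : IsCoSignotope n d τ) (hdn : d < n)
    (hpc : plusCount τ = p) (hp : p + d ≤ n) :
    ∀ (k : ℕ) (B : Finset ℕ), (aNE n B).card = k → τ B = true →
      ∃ i ≤ d, τ (sourceSubset n d i) = true ∧
        plusConn n d τ B (sourceSubset n d i) := by
  intro k
  induction k using Nat.strong_induction_on with
  | _ k IH =>
    intro B hk hB
    obtain ⟨hBU, hBd⟩ := hco.1 B hB
    rcases Finset.eq_empty_or_nonempty (aNE n B) with hemp | hne
    · have hset : ∀ c ∈ B, aLow n B c ∨ aHigh n B c := by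
        intro c hc
        by_contra hcon
        push_neg at hcon
        have hmem : c ∈ aNE n B := Finset.mem_filter.mpr ⟨hc, hcon.1, hcon.2⟩
        rw [hemp] at hmem
        exact absurd hmem (Finset.notMem_empty c)
      obtain ⟨i, hid, hBS⟩ := aux_settled hdn hBU hBd hset
      exact ⟨i, hid, hBS ▸ hB, hBS ▸ Relation.ReflTransGen.refl⟩
    · have hcmem := (aNE n B).min'_mem hne
      obtain ⟨hcB, hnl, hnh⟩ := Finset.mem_filter.mp hcmem
      have hmin : ∀ w ∈ B, w < (aNE n B).min' hne → aLow n B w := by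
        intro w hw hwc
        rcases Classical.em (aLow n B w) with h | h
        · exact h
        rcases Classical.em (aHigh n B w) with h2 | h2
        · exfalso
          apply hnh
          intro z hz hcz
          exact h2 z hz (lt_trans hwc hcz)
        · exfalso
          have hwmem : w ∈ aNE n B := Finset.mem_filter.mpr ⟨hw, h, h2⟩
          have := Finset.min'_le _ w hwmem
          omega
      obtain ⟨c0, hc0mem, B', hτB', hadj, hsub⟩ :
          ∃ c0 ∈ aNE n B, ∃ B', τ B' = true ∧ GAdj n d B B' ∧
            aNE n B' ⊆ (aNE n B).erase c0 := by
        rcases aux_LS_or_RS hco hdn hB hcB with hLS | hRS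
        · exact ⟨_, hcmem, aux_down_move hco hdn hB hcB hnl hnh hmin hLS⟩
        · have hchm := (aNE n B).max'_mem hne
          obtain ⟨hchB, hnl', hnh'⟩ := Finset.mem_filter.mp hchm
          have hcle := Finset.min'_le _ _ hchm
          have hRSch : aRS n τ B ((aNE n B).max' hne) := by
            rcases eq_or_lt_of_le hcle with heq | hlt
            · rw [← heq]; exact hRS
            · rcases aux_LS_or_RS hco hdn hB hchB with hL2 | hR2
              · exact absurd ⟨hRS, hL2⟩ (aux_prefix hco hdn hpc hp hB hcB hchB hlt)
              · exact hR2
          have hmax : ∀ w ∈ B, (aNE n B).max' hne < w → aHigh n B w := by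
            intro w hw hcw
            rcases Classical.em (aHigh n B w) with h | h
            · exact h
            rcases Classical.em (aLow n B w) with h2 | h2
            · exfalso
              apply hnl'
              intro z hz hzc
              exact h2 z hz (lt_trans hzc hcw)
            · exfalso
              have hwmem : w ∈ aNE n B := Finset.mem_filter.mpr ⟨hw, h2, h⟩
              have := Finset.le_max' _ w hwmem
              omega
          exact ⟨_, hchm, aux_up_move hco hdn hB hchB hnl' hnh' hmax hRSch⟩
      have hlt : (aNE n B').card < k := by
        have h1 := Finset.card_le_card hsub
        have h2 := Finset.card_erase_lt_of_mem hc0mem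
        omega
      obtain ⟨i, hid, hτS, hconn⟩ := IH _ hlt B' rfl hτB'
      exact ⟨i, hid, hτS, Relation.ReflTransGen.head ⟨hB, hτB', hadj⟩ hconn⟩

end AuxMain

/-- **Lemma.** For `p ≤ n - d` and `τ ∈ 𝒮̄_p(n,d)`, each `+`-component of `τ` contains
exactly one source subset: every `+`-subset `B` is connected within the `+`-subsets to
`S_{n,d,i}` for exactly one index `0 ≤ i ≤ d`. -/
theorem statement4 (n d p : ℕ) (hdn : d < n) (hp : p + d ≤ n)
    (τ : Finset ℕ → Bool) (hτ : τ ∈ coSigSet n d p)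
    (B : Finset ℕ) (hB : τ B = true) :
    ∃! i : ℕ, i ≤ d ∧ τ (sourceSubset n d i) = true ∧
      plusConn n d τ B (sourceSubset n d i) := by
  obtain ⟨hco, hpc⟩ := hτ
  obtain ⟨i, hid, hτS, hconn⟩ := aux_exists hco hdn hpc hp ((aNE n B).card) B rfl hB
  refine ⟨i, ⟨hid, hτS, hconn⟩, ?_⟩
  rintro j ⟨hjd, hτSj, hconnj⟩
  have h1 := aux_iota_conn hco hdn hpc hp hconn
  have h2 := aux_iota_conn hco hdn hpc hp hconnj
  have h3 := aux_iota_source hco hdn hpc hp hid hτS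
  have h4 := aux_iota_source hco hdn hpc hp hjd hτSj
  omega
end
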